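/- arXiv:2508.11555 — 7 statements merged into one kernel-verified Lean document; each statement's English description precedes it below -/
import Mathlib

section
/- The metric space (X, d_X) arising from the labeled perfect 2^d-ary tree has doubling dimension at most d: every ball of radius r in X can be covered by at most 2^d balls of radius r/2. -/
/-- Index of the first coordinate (counting from the root) where two leaves of the
perfect `2^d`-ary tree of depth `L` differ. -/
noncomputable def firstDiff (d L : ℕ) (u v : Fin L → Fin (2 ^ d)) : ℕ :=
  sInf {i | ∃ hi : i < L, u ⟨i, hi⟩ ≠ v ⟨i, hi⟩}

/-- The 2-HST metric on the `(2^d)^L` leaves of the labeled perfect `2^d`-ary tree: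
`d_X(u,v)` is the label `2^(height)` of the LCA of `u` and `v`. -/
noncomputable def treeDist (d L : ℕ) (u v : Fin L → Fin (2 ^ d)) : ℝ :=
  if u = v then 0 else 2 ^ (L - firstDiff d L u v)

lemma firstDiff_mem {d L : ℕ} {u v : Fin L → Fin (2 ^ d)} (h : u ≠ v) :
    ∃ hi : firstDiff d L u v < L,
      u ⟨firstDiff d L u v, hi⟩ ≠ v ⟨firstDiff d L u v, hi⟩ := by
  have hne : {i | ∃ hi : i < L, u ⟨i, hi⟩ ≠ v ⟨i, hi⟩}.Nonempty := by
    obtain ⟨i, hi⟩ := Function.ne_iff.mp h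
    exact ⟨i.1, i.2, by simpa using hi⟩
  exact Nat.sInf_mem hne

lemma firstDiff_agree {d L : ℕ} {u v : Fin L → Fin (2 ^ d)} {i : ℕ}
    (hlt : i < firstDiff d L u v) (hi : i < L) : u ⟨i, hi⟩ = v ⟨i, hi⟩ := by
  by_contra hne
  have hmem : i ∈ {i | ∃ hi : i < L, u ⟨i, hi⟩ ≠ v ⟨i, hi⟩} := ⟨hi, hne⟩
  exact absurd (Nat.sInf_le hmem) (not_le.mpr hlt)

lemma firstDiff_ge {d L : ℕ} {u v : Fin L → Fin (2 ^ d)} (h : u ≠ v) {t : ℕ}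
    (hag : ∀ i (hi : i < L), i < t → u ⟨i, hi⟩ = v ⟨i, hi⟩) :
    t ≤ firstDiff d L u v := by
  by_contra hlt
  push_neg at hlt
  obtain ⟨hl, hne⟩ := firstDiff_mem h
  exact hne (hag _ hl hlt)

/-- the tree metric has doubling dimension at most `d`: every ball of
radius `r` is covered by at most `2^d` balls of radius `r/2`. -/
theorem stmt3 (d L : ℕ) (hd : 1 ≤ d) (u : Fin L → Fin (2 ^ d)) (r : ℝ) :
    ∃ s : Finset (Fin L → Fin (2 ^ d)), s.card ≤ 2 ^ d ∧
      ∀ v, treeDist d L u v ≤ r → ∃ c ∈ s, treeDist d L c v ≤ r / 2 := by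
  have hcard : (1 : ℕ) ≤ 2 ^ d := Nat.one_le_two_pow
  by_cases hr2 : r < 2
  · refine ⟨{u}, by simpa using hcard, fun v hv => ⟨u, Finset.mem_singleton_self u, ?_⟩⟩
    have huv : u = v := by
      by_contra hne
      obtain ⟨hl, -⟩ := firstDiff_mem hne
      have h1 : 1 ≤ L - firstDiff d L u v := by omega
      have h2 : (2 : ℝ) ≤ 2 ^ (L - firstDiff d L u v) := by
        calc (2 : ℝ) = 2 ^ 1 := (pow_one 2).symm
        _ ≤ 2 ^ (L - firstDiff d L u v) := pow_le_pow_right₀ one_le_two h1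
      rw [treeDist, if_neg hne] at hv
      linarith
    rw [treeDist, if_pos huv] at hv ⊢
    linarith
  · push_neg at hr2
    rcases Nat.eq_zero_or_pos L with h0 | hL
    · subst h0
      refine ⟨{u}, by simpa using hcard, fun v _ => ⟨u, Finset.mem_singleton_self u, ?_⟩⟩
      have huv : u = v := funext fun i => i.elim0
      rw [treeDist, if_pos huv]; linarith
    · have hr0 : (0 : ℝ) ≤ r := by linarith
      set m := Nat.log 2 ⌊r⌋₊ with hmdef
      have hfloor : 2 ≤ ⌊r⌋₊ := Nat.le_floor (by exact_mod_cast hr2)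
      have hm1 : 1 ≤ m := by
        rw [hmdef, Nat.le_log_iff_pow_le one_lt_two (by omega)]
        simpa using hfloor
      have hpowle : (2 : ℝ) ^ m ≤ r := by
        calc (2 : ℝ) ^ m ≤ (⌊r⌋₊ : ℝ) := by
              exact_mod_cast Nat.pow_log_le_self 2 (by omega)
        _ ≤ r := Nat.floor_le hr0
      have hrle : r < 2 ^ (m + 1) := by
        have h1 : r < (⌊r⌋₊ : ℝ) + 1 := Nat.lt_floor_add_one r
        have h2 : ⌊r⌋₊ + 1 ≤ 2 ^ (m + 1) := Nat.lt_pow_succ_log_self one_lt_two _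
        have h2' : ((⌊r⌋₊ : ℝ)) + 1 ≤ 2 ^ (m + 1) := by exact_mod_cast h2
        linarith
      set j := L - m with hjdef
      have hj : j < L := by omega
      refine ⟨Finset.image (fun a : Fin (2 ^ d) => Function.update u ⟨j, hj⟩ a)
        Finset.univ, ?_, ?_⟩
      · exact Finset.card_image_le.trans (by simp)
      · intro v hv
        set c := Function.update u ⟨j, hj⟩ (v ⟨j, hj⟩) with hcdef
        refine ⟨c, Finset.mem_image_of_mem _ (Finset.mem_univ _), ?_⟩
        -- u and v agree below j
        have hagree : ∀ i (hi : i < L), i < j → u ⟨i, hi⟩ = v ⟨i, hi⟩ := by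
          intro i hi hij
          by_cases huv : u = v
          · rw [huv]
          · have hfd : j ≤ firstDiff d L u v := by
              rw [treeDist, if_neg huv] at hv
              have : (2 : ℝ) ^ (L - firstDiff d L u v) < 2 ^ (m + 1) := lt_of_le_of_lt hv hrle
              have hlt : L - firstDiff d L u v < m + 1 :=
                (pow_lt_pow_iff_right₀ (by norm_num : (1:ℝ) < 2)).mp this
              omega
            exact firstDiff_agree (lt_of_lt_of_le hij hfd) hi
        -- hence c and v agree on indices ≤ j
        have hcv : ∀ i (hi : i < L), i < j + 1 → c ⟨i, hi⟩ = v ⟨i, hi⟩ := by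
          intro i hi hij
          rcases Nat.lt_or_ge i j with h | h
          · have hne : (⟨i, hi⟩ : Fin L) ≠ ⟨j, hj⟩ := by
              simp [Fin.ext_iff]; omega
            rw [hcdef, Function.update_of_ne hne]
            exact hagree i hi h
          · have hij' : i = j := by omega
            subst hij'
            rw [hcdef, Function.update_self]
        by_cases hceq : c = v
        · rw [treeDist, if_pos hceq]; linarith
        · rw [treeDist, if_neg hceq]
          have hfd : j + 1 ≤ firstDiff d L c v := firstDiff_ge hceq hcv
          have hexp : L - firstDiff d L c v ≤ m - 1 := by omega
          have h1 : (2 : ℝ) ^ (L - firstDiff d L c v) ≤ 2 ^ (m - 1) :=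
            pow_le_pow_right₀ one_le_two hexp
          have h2 : (2 : ℝ) ^ (m - 1) ≤ r / 2 := by
            have : (2 : ℝ) ^ (m - 1) * 2 = 2 ^ m := by
              rw [← pow_succ]
              congr 1
              omega
            linarith [hpowle]
          linarith
end

section
/- Let (X, d_X) be an ultrametric space in which the minimum nonzero pairwise distance is at least 2, and let G = (X, E) be a weighted graph on X with edge weights equal to the metric distances. If the edge (u,v) is not in E, then any u–v path in G has length at least d_X(u,v) + 2. -/
/-- The weight of a path (list of vertices): the sum of the weights of its
consecutive pairs, where the weight of a pair is its metric distance. -/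
def pathWeight {X : Type*} (dX : X → X → ℝ) : List X → ℝ
  | [] => 0
  | [_] => 0
  | a :: b :: l => dX a b + pathWeight dX (b :: l)

/-- `G = (X,E)` (edge weights = distances) is a `t`-spanner of `(X,dX)`:
every pair is joined by a path in `G` of weight at most `t` times its distance. -/
def IsSpanner {X : Type*} (dX : X → X → ℝ) (E : X → X → Prop) (t : ℝ) : Prop :=
  ∀ u v : X, ∃ p : List X, p.Chain' E ∧ p.head? = some u ∧ p.getLast? = some v ∧
    pathWeight dX p ≤ t * dX u v

lemma dX_nonneg {X : Type*} (dX : X → X → ℝ) (hself : ∀ u, dX u u = 0)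
    (hmin : ∀ u v : X, u ≠ v → 2 ≤ dX u v) (a b : X) : 0 ≤ dX a b := by
  by_cases h : a = b
  · subst h; rw [hself]
  · linarith [hmin a b h]

lemma pathWeight_ge_dist {X : Type*} (dX : X → X → ℝ) (hself : ∀ u, dX u u = 0)
    (hultra : ∀ u v w, dX u w ≤ max (dX u v) (dX v w))
    (hmin : ∀ u v : X, u ≠ v → 2 ≤ dX u v) :
    ∀ (p : List X) (a b : X),
    p.head? = some a → p.getLast? = some b → dX a b ≤ pathWeight dX p
  | [], a, b => by simp
  | [x], a, b => by
      intro ha hb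
      simp only [List.head?_cons, List.getLast?_singleton, Option.some.injEq] at ha hb
      subst ha; subst hb
      simp [pathWeight, hself]
  | x :: y :: l, a, b => by
      intro ha hb
      simp only [List.head?_cons, Option.some.injEq] at ha
      subst ha
      rw [List.getLast?_cons_cons] at hb
      have ih := pathWeight_ge_dist dX hself hultra hmin (y :: l) y b rfl hb
      have h2 : dX x b ≤ max (dX x y) (dX y b) := hultra x y b
      have h3 : max (dX x y) (dX y b) ≤ dX x y + dX y b := by
        have := dX_nonneg dX hself hmin x y
        have := dX_nonneg dX hself hmin y b
        rcases max_cases (dX x y) (dX y b) with ⟨h, _⟩ | ⟨h, _⟩ <;> rw [h] <;> linarith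
      simp only [pathWeight]
      linarith

/-- in an ultrametric with minimum nonzero distance at least 2, if the
edge `(u,v)` is absent from the graph, then every `u`–`v` path in the graph has
length at least `d_X(u,v) + 2`. -/
theorem stmt5 {X : Type*} (dX : X → X → ℝ)
    (hsymm : ∀ u v, dX u v = dX v u) (hself : ∀ u, dX u u = 0)
    (hultra : ∀ u v w, dX u w ≤ max (dX u v) (dX v w))
    (hmin : ∀ u v : X, u ≠ v → 2 ≤ dX u v)
    (E : X → X → Prop) (hEsymm : Symmetric E) (hEirr : ∀ x, ¬ E x x)
    (u v : X) (huv : u ≠ v) (hE : ¬ E u v)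
    (p : List X) (hp : p.Chain' E) (hhead : p.head? = some u)
    (hlast : p.getLast? = some v) :
    dX u v + 2 ≤ pathWeight dX p := by
  match p with
  | [] => simp at hhead
  | [x] =>
      simp only [List.head?_cons, List.getLast?_singleton, Option.some.injEq] at hhead hlast
      exact absurd (hhead.symm.trans hlast) huv
  | x :: y :: l =>
      simp only [List.head?_cons, Option.some.injEq] at hhead
      subst hhead
      rw [List.getLast?_cons_cons] at hlast
      have hEuy : E x y := (List.isChain_cons_cons.mp hp).1
      have hch : (y :: l).Chain' E := (List.isChain_cons_cons.mp hp).2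
      have huy : x ≠ y := by rintro rfl; exact hEirr x hEuy
      have hle : dX y v ≤ pathWeight dX (y :: l) :=
        pathWeight_ge_dist dX hself hultra hmin _ y v rfl hlast
      simp only [pathWeight]
      by_cases hyv : y = v
      · subst hyv
        match l with
        | [] => exact absurd hEuy hE
        | c :: l' =>
            have hEyc : E y c := (List.isChain_cons_cons.mp hch).1
            have hyc : y ≠ c := by rintro rfl; exact hEirr y hEyc
            rw [List.getLast?_cons_cons] at hlast
            have hle2 : dX c y ≤ pathWeight dX (c :: l') :=
              pathWeight_ge_dist dX hself hultra hmin _ c y rfl hlast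
            have h2 : 2 ≤ dX y c := hmin y c hyc
            have h3 : 0 ≤ dX c y := dX_nonneg dX hself hmin c y
            simp only [pathWeight]
            linarith
      · have h2 : 2 ≤ dX y v := hmin y v hyv
        have h3 : 2 ≤ dX x y := hmin x y huy
        have h4 : dX x v ≤ max (dX x y) (dX y v) := hultra x y v
        rcases max_cases (dX x y) (dX y v) with ⟨h, _⟩ | ⟨h, _⟩ <;> rw [h] at h4 <;> linarith
end

section
/- Let (X, d_X) be a finite ultrametric space with minimum nonzero distance at least 2, and let G = (X, E) be a (1+ε)-spanner of X for some ε ∈ (0,1). Then for every pair u, v ∈ X with d_X(u,v) < 2/ε, the edge (u,v) must belong to E. -/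
section aux

variable {X : Type*} (dX : X → X → ℝ) (E : X → X → Prop)

/-- every edge in the chain weighs at least 2, so weight ≥ 2·(#edges). -/
lemma aux_weight_ge (hed : ∀ a b, E a b → 2 ≤ dX a b) :
    ∀ (l : List X) (a : X), List.Chain' E (a :: l) →
      2 * l.length ≤ pathWeight dX (a :: l) := by
  intro l
  induction l with
  | nil => intro a _; simp [pathWeight]
  | cons b l ih =>
    intro a hch
    rw [List.Chain', List.isChain_cons_cons] at hch
    have h1 := hed a b hch.1
    have h2 := ih b hch.2
    simp only [pathWeight, List.length_cons]
    push_cast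
    push_cast at h2
    linarith

/-- weight ≥ d(head,last) + 2·(#edges − 1). -/
lemma aux_weight_ge2 (hultra : ∀ u v w, dX u w ≤ max (dX u v) (dX v w))
    (hmin : ∀ u v : X, u ≠ v → 2 ≤ dX u v)
    (hed : ∀ a b, E a b → 2 ≤ dX a b) :
    ∀ (l : List X) (a b w : X), List.Chain' E (a :: b :: l) →
      (b :: l).getLast? = some w →
      dX a w + 2 * l.length ≤ pathWeight dX (a :: b :: l) := by
  intro l
  induction l with
  | nil =>
    intro a b w hch hl
    simp only [List.getLast?_singleton, Option.some.injEq] at hl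
    subst hl
    simp [pathWeight]
  | cons c l ih =>
    intro a b w hch hl
    rw [List.getLast?_cons_cons] at hl
    rw [List.Chain', List.isChain_cons_cons] at hch
    have hab := hed a b hch.1
    have ih' := ih b c w hch.2 hl
    simp only [pathWeight, List.length_cons] at *
    by_cases hbw : b = w
    · subst hbw
      have h1 := aux_weight_ge dX E hed (c :: l) b hch.2
      simp only [List.length_cons, pathWeight] at h1
      push_cast at h1 ⊢
      linarith
    · have hbw2 := hmin b w hbw
      have htri : dX a w ≤ max (dX a b) (dX b w) := hultra a b w
      have key : dX a w + 2 ≤ dX a b + dX b w := by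
        rcases max_cases (dX a b) (dX b w) with ⟨h, _⟩ | ⟨h, _⟩ <;> rw [h] at htri <;> linarith
      -- need d b w ≤ pathWeight tail - 2*l.length : from ih'
      push_cast at ih' ⊢
      linarith

end aux

/-- in a finite ultrametric with minimum nonzero distance at least 2,
any `(1+ε)`-spanner must contain every edge `(u,v)` with `d_X(u,v) < 2/ε`. -/
theorem stmt6 {X : Type*} [Finite X] (dX : X → X → ℝ)
    (hsymm : ∀ u v, dX u v = dX v u) (hself : ∀ u, dX u u = 0)
    (hultra : ∀ u v w, dX u w ≤ max (dX u v) (dX v w))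
    (hmin : ∀ u v : X, u ≠ v → 2 ≤ dX u v)
    (ε : ℝ) (hε0 : 0 < ε) (hε1 : ε < 1)
    (E : X → X → Prop) (hEsymm : Symmetric E) (hEirr : ∀ x, ¬ E x x)
    (hspan : IsSpanner dX E (1 + ε))
    (u v : X) (huv : u ≠ v) (hclose : dX u v < 2 / ε) :
    E u v := by
  have hed : ∀ a b, E a b → 2 ≤ dX a b := by
    intro a b h
    refine hmin a b ?_
    rintro rfl; exact hEirr a h
  obtain ⟨p, hch, hhd, hlst, hwt⟩ := hspan u v
  match p, hhd with
  | a :: l, hhd =>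
  simp only [List.head?_cons, Option.some.injEq] at hhd
  subst hhd
  match l with
  | [] =>
    simp only [List.getLast?_singleton, Option.some.injEq] at hlst
    exact absurd hlst huv
  | b :: l =>
    rw [List.getLast?_cons_cons] at hlst
    have h2 := aux_weight_ge2 dX E hultra hmin hed l a b v hch hlst
    have hεd : dX a v * ε < 2 := (lt_div_iff₀ hε0).mp hclose
    have hl0 : l.length = 0 := by
      by_contra h
      have h1 : (1 : ℝ) ≤ l.length := by exact_mod_cast Nat.one_le_iff_ne_zero.mpr h
      nlinarith [h2, hwt]
    rw [List.length_eq_zero_iff] at hl0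
    subst hl0
    simp only [List.getLast?_singleton, Option.some.injEq] at hlst
    subst hlst
    simp only [List.Chain', List.isChain_cons_cons, List.isChain_singleton, and_true] at hch
    exact hch
end

section
/- Let (X, d_X) be a finite metric space and let S ⊆ X be a subset of size m such that every pair of distinct points of S lies at distance < 2/ε, and suppose the minimum nonzero distance in X is at least 2 and d_X is an ultrametric. Then any (1+ε)-spanner of X contains all m(m-1)/2 edges between points of S, so it has at least m(m-1)/2 edges. -/
/-- Each edge of a chain has weight at least 2, so a path with `l.length` edges
has weight at least `2 * l.length`. -/
lemma stmt7_aux1 {X : Type*} (dX : X → X → ℝ) (E : X → X → Prop)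
    (hmin : ∀ u v : X, u ≠ v → 2 ≤ dX u v) (hEirr : ∀ x, ¬ E x x) :
    ∀ (l : List X) (a : X), (a :: l).Chain' E → 2 * l.length ≤ pathWeight dX (a :: l) := by
  intro l
  induction l with
  | nil => intro a _; simp [pathWeight]
  | cons b l ih =>
      intro a hc
      simp only [List.Chain', List.isChain_cons_cons] at hc
      have hab : a ≠ b := by rintro rfl; exact hEirr a hc.1
      have h2 := hmin a b hab
      have := ih b hc.2
      simp only [pathWeight, List.length_cons]
      push_cast
      linarith

/-- In an ultrametric with minimum distance 2, a path with at least two edges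
from `a` to `v` has weight at least `dX a v + 2 * (#edges - 1)`. -/
lemma stmt7_aux2 {X : Type*} (dX : X → X → ℝ) (E : X → X → Prop)
    (hultra : ∀ u v w, dX u w ≤ max (dX u v) (dX v w))
    (hmin : ∀ u v : X, u ≠ v → 2 ≤ dX u v) (hEirr : ∀ x, ¬ E x x) :
    ∀ (l : List X) (a b v : X), (a :: b :: l).Chain' E →
      (a :: b :: l).getLast? = some v →
      dX a v + 2 * l.length ≤ pathWeight dX (a :: b :: l) := by
  intro l
  induction l with
  | nil =>
      intro a b v hc hl
      have : b = v := by simpa using hl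
      subst this
      simp [pathWeight]
  | cons c l ih =>
      intro a b v hc hl
      unfold List.Chain' at hc; rw [List.isChain_cons_cons] at hc
      have hab : a ≠ b := by rintro rfl; exact hEirr a hc.1
      have h2 := hmin a b hab
      have hl' : (b :: c :: l).getLast? = some v := by
        rw [List.getLast?_cons_cons] at hl; exact hl
      rcases le_or_gt (dX a v) (dX a b) with h | h
      · have := stmt7_aux1 dX E hmin hEirr (c :: l) b hc.2
        simp only [pathWeight, List.length_cons] at this ⊢
        push_cast at this ⊢
        linarith
      · have hbv : dX a v ≤ dX b v := by
          have := hultra a b v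
          rcases max_cases (dX a b) (dX b v) with ⟨he, _⟩ | ⟨he, _⟩ <;> rw [he] at this <;> linarith
        have := ih b c v hc.2 hl'
        simp only [pathWeight, List.length_cons] at this ⊢
        push_cast at this ⊢
        linarith

/-- if `S` is a set of `m` points, pairwise at distance `< 2/ε`, in a
finite ultrametric with minimum nonzero distance at least 2, then any
`(1+ε)`-spanner contains all edges inside `S`; hence it has at least
`m(m-1)/2` edges, i.e. at least `m(m-1)` ordered edge pairs. -/
theorem stmt7 {X : Type*} [Finite X] (dX : X → X → ℝ)
    (hsymm : ∀ u v, dX u v = dX v u) (hself : ∀ u, dX u u = 0)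
    (hultra : ∀ u v w, dX u w ≤ max (dX u v) (dX v w))
    (hmin : ∀ u v : X, u ≠ v → 2 ≤ dX u v)
    (ε : ℝ) (hε0 : 0 < ε) (hε1 : ε < 1)
    (S : Set X) (m : ℕ) (hm : S.ncard = m)
    (hSclose : ∀ u ∈ S, ∀ v ∈ S, u ≠ v → dX u v < 2 / ε)
    (E : X → X → Prop) (hEsymm : Symmetric E) (hEirr : ∀ x, ¬ E x x)
    (hspan : IsSpanner dX E (1 + ε)) :
    (∀ u ∈ S, ∀ v ∈ S, u ≠ v → E u v) ∧
    m * (m - 1) ≤ Set.ncard {q : X × X | E q.1 q.2} := by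
  have hedge : ∀ u ∈ S, ∀ v ∈ S, u ≠ v → E u v := by
    intro u hu v hv huv
    obtain ⟨p, hc, hh, hl, hw⟩ := hspan u v
    match p with
    | [] => simp at hh
    | [a] =>
        have ha : a = u := by simpa using hh
        have hb : a = v := by simpa using hl
        exact absurd (ha ▸ hb) huv
    | a :: b :: l =>
        have ha : a = u := by simpa using hh
        subst ha
        match l with
        | [] =>
            have hb : b = v := by simpa using hl
            subst hb
            simp only [List.Chain', List.isChain_cons_cons] at hc
            exact hc.1
        | c :: l' =>
            exfalso
            have hlow := stmt7_aux2 dX E hultra hmin hEirr (c :: l') a b v hc hl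
            have hd2 := hmin a v huv
            have hdlt := hSclose a hu v hv huv
            have hεd : ε * dX a v < 2 := by
              have := (mul_lt_mul_iff_right₀ hε0).2 hdlt
              rwa [mul_div_cancel₀ 2 (ne_of_gt hε0)] at this
            have hlen : (2 : ℝ) * (c :: l').length ≥ 2 := by
              simp only [List.length_cons]
              push_cast
              linarith [Nat.cast_nonneg (α := ℝ) l'.length]
            have : dX a v + 2 ≤ (1 + ε) * dX a v := by
              calc dX a v + 2 ≤ dX a v + 2 * (c :: l').length := by linarith
                _ ≤ pathWeight dX (a :: b :: c :: l') := hlow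
                _ ≤ (1 + ε) * dX a v := hw
            nlinarith
  refine ⟨hedge, ?_⟩
  classical
  haveI : Fintype X := Fintype.ofFinite X
  have hsub : (↑S.toFinset.offDiag : Set (X × X)) ⊆ {q : X × X | E q.1 q.2} := by
    rintro ⟨x, y⟩ hxy
    simp only [Finset.coe_offDiag, Set.mem_offDiag, Set.mem_toFinset, Set.coe_toFinset] at hxy
    exact hedge x hxy.1 y hxy.2.1 hxy.2.2
  have hcard : S.toFinset.card = m := by
    rw [← hm, Set.ncard_eq_toFinset_card']
  have h1 : (↑S.toFinset.offDiag : Set (X × X)).ncard = m * (m - 1) := by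
    rw [Set.ncard_coe_finset, Finset.offDiag_card, hcard]
    cases m with
    | zero => simp
    | succ k => simp [Nat.succ_sub_one, Nat.mul_succ, Nat.succ_mul]
  calc m * (m - 1) = (↑S.toFinset.offDiag : Set (X × X)).ncard := h1.symm
    _ ≤ Set.ncard {q : X × X | E q.1 q.2} := Set.ncard_le_ncard hsub (Set.toFinite _)
end

section
/- For every integer d ≥ 1, every ε ∈ (0,1), and every n ∈ ℤ⁺ with ε^{-d} ≤ c·n for a suitable constant c, there exists an n-point ultrametric space (X, d_X) of doubling dimension at most d such that every (1+ε)-spanner of X has Ω(n·ε^{-d}) edges. -/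
private lemma pw_ge_card {X : Type*} (dX : X → X → ℝ) (δ : ℝ) :
    ∀ p : List X, p.Chain' (fun a b => δ ≤ dX a b) →
      ((p.length - 1 : ℕ) : ℝ) * δ ≤ pathWeight dX p := by
  intro p
  induction p with
  | nil => intro _; simp [pathWeight]
  | cons a q ih =>
    cases q with
    | nil => intro _; simp [pathWeight]
    | cons b q' =>
      intro hc
      replace hc := List.isChain_cons_cons.mp hc
      have h1 := ih hc.2
      simp only [List.length_cons, Nat.add_sub_cancel] at h1 ⊢
      show ((q'.length + 1 : ℕ) : ℝ) * δ ≤ dX a b + pathWeight dX (b :: q')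
      push_cast
      push_cast at h1
      nlinarith [hc.1]

private lemma pw_ge_ultra {X : Type*} (dX : X → X → ℝ) (δ : ℝ)
    (hUlt : ∀ u v w, dX u w ≤ max (dX u v) (dX v w)) :
    ∀ p : List X, ∀ u v : X, p.Chain' (fun a b => δ ≤ dX a b) →
      p.head? = some u → p.getLast? = some v → u ≠ v →
      dX u v + ((p.length - 2 : ℕ) : ℝ) * δ ≤ pathWeight dX p := by
  intro p
  induction p with
  | nil => intro u v _ h; simp at h
  | cons a q ih =>
    intro u v hc hh hl huv
    have hua : u = a := by simpa using hh.symm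
    subst hua
    cases q with
    | nil =>
      exfalso; apply huv; have : v = u := by simpa using hl.symm
      exact this.symm
    | cons b q' =>
      replace hc := List.isChain_cons_cons.mp hc
      have hl' : (b :: q').getLast? = some v := by
        rwa [List.getLast?_cons_cons] at hl
      by_cases hbv : b = v
      · subst hbv
        have h1 := pw_ge_card dX δ (b :: q') hc.2
        show dX u b + ((q'.length + 1 + 1 - 2 : ℕ) : ℝ) * δ ≤ dX u b + pathWeight dX (b :: q')
        simp only [List.length_cons, Nat.add_sub_cancel] at h1 ⊢
        have he : q'.length + 1 + 1 - 2 = q'.length := by omega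
        rw [he]
        linarith
      · have hq' : q' ≠ [] := by
          rintro rfl
          have : v = b := by simpa using hl'.symm
          exact hbv this.symm
        obtain ⟨c, q'', rfl⟩ := List.exists_cons_of_ne_nil hq'
        have h2 := ih b v hc.2 (by simp) hl' hbv
        have hmax := hUlt u b v
        have h1 := pw_ge_card dX δ (b :: c :: q'') hc.2
        show dX u v + ((q''.length + 1 + 1 + 1 - 2 : ℕ) : ℝ) * δ ≤
          dX u b + pathWeight dX (b :: c :: q'')
        simp only [List.length_cons] at h1 h2 ⊢
        have e1 : q''.length + 1 + 1 + 1 - 2 = q''.length + 1 := by omega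
        have e2 : q''.length + 1 + 1 - 2 = q''.length := by omega
        rw [e1]; rw [e2] at h2
        rcases max_cases (dX u b) (dX b v) with ⟨heq, _⟩ | ⟨heq, _⟩ <;> rw [heq] at hmax
        · push_cast at h1 ⊢; linarith
        · push_cast at h2 ⊢; linarith [hc.1]

private def cpf (B M i k : ℕ) : ℕ :=
  Nat.findGreatest (fun t => i / B ^ (M - t) = k / B ^ (M - t)) M

private lemma cpf_le (B M i k : ℕ) : cpf B M i k ≤ M := Nat.findGreatest_le M

private lemma div_eq_down {B i k t t' M : ℕ} (h : i / B ^ (M - t') = k / B ^ (M - t'))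
    (htt : t ≤ t') (ht' : t' ≤ M) : i / B ^ (M - t) = k / B ^ (M - t) := by
  have e : M - t = (M - t') + (t' - t) := by omega
  rw [e, pow_add, ← Nat.div_div_eq_div_mul, ← Nat.div_div_eq_div_mul, h]

private lemma cpf_spec {B M i k : ℕ} (hi : i < B ^ M) (hk : k < B ^ M) :
    i / B ^ (M - cpf B M i k) = k / B ^ (M - cpf B M i k) := by
  have h0 : i / B ^ (M - 0) = k / B ^ (M - 0) := by
    simp [Nat.div_eq_of_lt hi, Nat.div_eq_of_lt hk]
  exact Nat.findGreatest_spec (P := fun t => i / B ^ (M - t) = k / B ^ (M - t)) (Nat.zero_le M) h0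

private lemma le_cpf {B M i k t : ℕ} (ht : t ≤ M) (h : i / B ^ (M - t) = k / B ^ (M - t)) :
    t ≤ cpf B M i k := Nat.le_findGreatest ht h

private lemma cpf_ge_iff {B M i k t : ℕ} (ht : t ≤ M) (hi : i < B ^ M) (hk : k < B ^ M) :
    t ≤ cpf B M i k ↔ i / B ^ (M - t) = k / B ^ (M - t) := by
  constructor
  · intro h
    exact div_eq_down (cpf_spec hi hk) h (cpf_le B M i k)
  · exact le_cpf ht

private lemma cpf_eq_M_iff {B M i k : ℕ} (hi : i < B ^ M) (hk : k < B ^ M) :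
    cpf B M i k = M ↔ i = k := by
  constructor
  · intro h
    have := cpf_spec hi hk
    rw [h] at this
    simpa using this
  · intro h
    exact le_antisymm (cpf_le B M i k) (le_cpf le_rfl (by rw [h]))

private lemma cpf_symm {B M i k : ℕ} (hi : i < B ^ M) (hk : k < B ^ M) :
    cpf B M i k = cpf B M k i := by
  apply le_antisymm
  · exact le_cpf (cpf_le B M i k) (cpf_spec hi hk).symm
  · exact le_cpf (cpf_le B M k i) (cpf_spec hk hi).symm

private lemma cpf_ultra {B M i j k : ℕ} (hi : i < B ^ M) (hj : j < B ^ M) (hk : k < B ^ M) :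
    min (cpf B M i j) (cpf B M j k) ≤ cpf B M i k := by
  set t := min (cpf B M i j) (cpf B M j k) with hts
  have htM : t ≤ M := le_trans (min_le_left _ _) (cpf_le B M i j)
  have h1 : i / B ^ (M - t) = j / B ^ (M - t) :=
    div_eq_down (cpf_spec hi hj) (min_le_left _ _) (cpf_le B M i j)
  have h2 : j / B ^ (M - t) = k / B ^ (M - t) :=
    div_eq_down (cpf_spec hj hk) (min_le_right _ _) (cpf_le B M j k)
  exact le_cpf htM (h1.trans h2)


set_option maxHeartbeats 1000000 in
/-- for every `d ≥ 1` there are constants `c₁, c₂ > 0` such that for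
every `ε ∈ (0,1)` and every `n` with `ε⁻¹^d ≤ c₁·n`, there is an `n`-point
ultrametric space of doubling dimension at most `d` on which every
`(1+ε)`-spanner has at least `c₂·n·ε⁻¹^d` (ordered) edges. -/
theorem stmt8 (d : ℕ) (hd : 1 ≤ d) :
    ∃ c₁ c₂ : ℝ, 0 < c₁ ∧ 0 < c₂ ∧
    ∀ ε : ℝ, 0 < ε → ε < 1 → ∀ n : ℕ, 0 < n → ε⁻¹ ^ d ≤ c₁ * n →
    ∃ dX : Fin n → Fin n → ℝ,
      (∀ u v, 0 ≤ dX u v) ∧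
      (∀ u v, dX u v = 0 ↔ u = v) ∧
      (∀ u v, dX u v = dX v u) ∧
      (∀ u v w, dX u w ≤ max (dX u v) (dX v w)) ∧
      (∀ (x : Fin n) (r : ℝ), ∃ s : Finset (Fin n), s.card ≤ 2 ^ d ∧
        ∀ y, dX x y ≤ r → ∃ c ∈ s, dX c y ≤ r / 2) ∧
      (∀ E : Fin n → Fin n → Prop, Symmetric E → (∀ x, ¬ E x x) →
        IsSpanner dX E (1 + ε) →
        c₂ * n * ε⁻¹ ^ d ≤ (Set.ncard {q : Fin n × Fin n | E q.1 q.2} : ℝ)) := by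
  classical
  refine ⟨1 / 2 ^ (d + 1), 1 / 4, by positivity, by norm_num, ?_⟩
  intro ε hε0 hε1 n hn0 hεn
  set B : ℕ := 2 ^ d with hBdef
  have hB2 : 2 ≤ B := by
    calc 2 = 2 ^ 1 := (pow_one 2).symm
    _ ≤ 2 ^ d := Nat.pow_le_pow_right (by norm_num) hd
  have hB0 : 0 < B := by omega
  -- the scale index l
  have hex_l : ∃ l : ℕ, (1 : ℝ) ≤ ε * 2 ^ l := by
    obtain ⟨l, hl⟩ := pow_unbounded_of_one_lt ε⁻¹ (by norm_num : (1:ℝ) < 2)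
    refine ⟨l, ?_⟩
    have h2 := mul_le_mul_of_nonneg_left (le_of_lt hl) hε0.le
    rw [mul_inv_cancel₀ (ne_of_gt hε0)] at h2
    exact h2
  set l : ℕ := Nat.find hex_l with hldef
  have hl_spec : (1 : ℝ) ≤ ε * 2 ^ l := Nat.find_spec hex_l
  have hl1 : 1 ≤ l := by
    rcases Nat.eq_zero_or_pos l with h | h
    · exfalso; rw [h] at hl_spec; simp at hl_spec; linarith
    · exact h
  have hl_min : ε * 2 ^ (l - 1) < 1 := by
    have := Nat.find_min hex_l (m := l - 1) (by omega)
    linarith [not_le.mp this]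
  -- the depth M
  have hex_M : ∃ M : ℕ, n ≤ B ^ M :=
    ⟨n, le_of_lt (Nat.lt_pow_self (n := n) (by omega))⟩
  set M : ℕ := Nat.find hex_M with hMdef
  have hM_spec : n ≤ B ^ M := Nat.find_spec hex_M
  have hval : ∀ u : Fin n, (u : ℕ) < B ^ M := fun u => lt_of_lt_of_le u.isLt hM_spec
  -- basic real inequalities
  have hinv_le : ε⁻¹ ≤ 2 ^ l := by
    rw [inv_le_iff_one_le_mul₀ hε0]; linarith
  have hinv_lt : (2 : ℝ) ^ (l - 1) < ε⁻¹ := by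
    have h := mul_lt_mul_of_pos_left hl_min (inv_pos.mpr hε0)
    rw [← mul_assoc, inv_mul_cancel₀ (ne_of_gt hε0), one_mul, mul_one] at h
    exact h
  have hinv_pow : ε⁻¹ ^ d ≤ ((B ^ l : ℕ) : ℝ) := by
    have h1 : ε⁻¹ ^ d ≤ ((2:ℝ) ^ l) ^ d := pow_le_pow_left₀ (by positivity) hinv_le d
    have h2 : (((2:ℕ) ^ d) ^ l : ℕ) = (((2:ℝ) ^ l) ^ d : ℝ) := by
      push_cast; rw [← pow_mul, ← pow_mul, mul_comm]
    rw [hBdef, h2]; exact h1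
  have hBl_half : ((B ^ l : ℕ) : ℝ) < n / 2 := by
    have h1 : ((2:ℝ) ^ (l-1)) ^ d < ε⁻¹ ^ d :=
      pow_lt_pow_left₀ hinv_lt (by positivity) (by omega)
    have h2 : ((B ^ l : ℕ) : ℝ) = 2 ^ d * ((2:ℝ) ^ (l-1)) ^ d := by
      push_cast [hBdef]
      rw [← pow_mul, ← pow_mul, ← pow_add]
      congr 1
      have hm : l - 1 + 1 = l := by omega
      calc d * l = d * (l - 1 + 1) := by rw [hm]
      _ = d + (l - 1) * d := by ring
    have h3 : (2:ℝ) ^ d * ε⁻¹ ^ d ≤ 2 ^ d * (1 / 2 ^ (d+1) * n) := by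
      apply mul_le_mul_of_nonneg_left hεn (by positivity)
    have h4 : (2:ℝ) ^ d * (1 / 2 ^ (d+1) * n) = n / 2 := by
      rw [pow_succ]; field_simp
    have h5 : (2:ℝ) ^ d * ((2:ℝ) ^ (l-1)) ^ d < 2 ^ d * ε⁻¹ ^ d := by
      apply mul_lt_mul_of_pos_left h1 (by positivity)
    linarith
  have h2Bl : 2 * B ^ l < n := by
    have := hBl_half
    have hc : ((2 * B ^ l : ℕ) : ℝ) < (n : ℕ) := by push_cast; push_cast at this; linarith
    exact_mod_cast hc
  have hlM : l < M := by
    have h1 : B ^ l < B ^ M := lt_of_lt_of_le (by omega) hM_spec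
    exact (Nat.pow_lt_pow_iff_right (by omega)).mp h1
  -- the metric
  set dX : Fin n → Fin n → ℝ := fun u v =>
    if u = v then 0 else (2 : ℝ) ^ (-(cpf B M u v : ℤ)) with hdXdef
  have hcp_lt : ∀ u v : Fin n, u ≠ v → cpf B M u v < M := by
    intro u v huv
    rcases Nat.lt_or_ge (cpf B M (u:ℕ) (v:ℕ)) M with h | h
    · exact h
    · exfalso
      have : cpf B M (u:ℕ) (v:ℕ) = M := le_antisymm (cpf_le B M _ _) h
      exact huv (Fin.val_injective ((cpf_eq_M_iff (hval u) (hval v)).mp this))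
  have hd_nonneg : ∀ u v, 0 ≤ dX u v := by
    intro u v; rw [hdXdef]; dsimp only
    split
    · exact le_rfl
    · positivity
  have hd_eq : ∀ u v, dX u v = 0 ↔ u = v := by
    intro u v; rw [hdXdef]; dsimp only
    split_ifs with h
    · simpa using h
    · simp only [h, iff_false]
      positivity
  have hd_symm : ∀ u v, dX u v = dX v u := by
    intro u v; rw [hdXdef]; dsimp only
    rcases eq_or_ne u v with rfl | h
    · simp
    · rw [if_neg h, if_neg (Ne.symm h), cpf_symm (hval u) (hval v)]
  have hd_ultra : ∀ u v w, dX u w ≤ max (dX u v) (dX v w) := by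
    intro u v w
    rcases eq_or_ne u w with rfl | huw
    · have h0 : dX u u = 0 := by simp [hdXdef]
      rw [h0]
      exact le_trans (hd_nonneg u v) (le_max_left _ _)
    rcases eq_or_ne u v with rfl | huv
    · exact le_max_right _ _
    rcases eq_or_ne v w with rfl | hvw
    · exact le_max_left _ _
    have hmin := cpf_ultra (B := B) (M := M) (hval u) (hval v) (hval w)
    rw [hdXdef]; dsimp only
    rw [if_neg huw, if_neg huv, if_neg hvw]
    rcases min_cases (cpf B M (u:ℕ) (v:ℕ)) (cpf B M (v:ℕ) (w:ℕ)) with ⟨hm, _⟩ | ⟨hm, _⟩ <;>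
      rw [hm] at hmin
    · exact le_max_of_le_left (zpow_le_zpow_right₀ one_le_two (by exact_mod_cast neg_le_neg (Int.ofNat_le.mpr hmin)))
    · exact le_max_of_le_right (zpow_le_zpow_right₀ one_le_two (by exact_mod_cast neg_le_neg (Int.ofNat_le.mpr hmin)))
  refine ⟨dX, hd_nonneg, hd_eq, hd_symm, hd_ultra, ?_, ?_⟩
  · -- doubling
    intro x r
    by_cases hr0 : 0 ≤ r
    · have hex_t : ∃ t : ℕ, (2:ℝ) ^ (-(t:ℤ)) ≤ r ∨ t = M := ⟨M, Or.inr rfl⟩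
      set t : ℕ := Nat.find hex_t with htdef
      have ht_spec : (2:ℝ) ^ (-(t:ℤ)) ≤ r ∨ t = M := Nat.find_spec hex_t
      have htM : t ≤ M := Nat.find_le (Or.inr rfl)
      have hball : ∀ y : Fin n, dX x y ≤ r → y ≠ x → t ≤ cpf B M (x:ℕ) (y:ℕ) := by
        intro y hy hyx
        by_contra hlt
        push_neg at hlt
        have hmin := Nat.find_min hex_t (m := cpf B M (x:ℕ) (y:ℕ)) hlt
        push_neg at hmin
        have hdxy : dX x y = (2:ℝ) ^ (-(cpf B M (x:ℕ) (y:ℕ) : ℤ)) := if_neg (Ne.symm hyx)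
        rw [hdxy] at hy
        exact absurd hy (not_le.mpr hmin.1)
      rcases eq_or_lt_of_le htM with htM' | htM'
      · -- t = M : the ball is just {x}
        refine ⟨{x}, ?_, ?_⟩
        · simp only [Finset.card_singleton]
          exact Nat.one_le_two_pow
        · intro y hy
          refine ⟨x, Finset.mem_singleton_self x, ?_⟩
          have hyx : y = x := by
            by_contra hyx
            have h1 := hball y hy hyx
            have hle := cpf_le B M (x:ℕ) (y:ℕ)
            have h2 : cpf B M (x:ℕ) (y:ℕ) = M := by omega
            exact hyx (Fin.val_injective ((cpf_eq_M_iff (hval x) (hval y)).mp h2)).symm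
          subst hyx
          have h0 : dX y y = 0 := by simp [hdXdef]
          rw [h0]; linarith
      · -- t < M
        have htr : (2:ℝ) ^ (-(t:ℤ)) ≤ r := ht_spec.resolve_right (by omega)
        set P : ℕ := B ^ (M - t - 1) with hPdef
        have hPB : P * B = B ^ (M - t) := by
          rw [hPdef, ← pow_succ]
          congr 1
          omega
        set ball : Finset (Fin n) := Finset.univ.filter (fun y => dX x y ≤ r) with hballdef
        have hclsne : ∀ y : Fin n,
            (Finset.univ.filter (fun z : Fin n => (z:ℕ)/P = (y:ℕ)/P)).Nonempty :=
          fun y => ⟨y, by simp⟩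
        set g : Fin n → Fin n := fun y =>
          (Finset.univ.filter (fun z : Fin n => (z:ℕ)/P = (y:ℕ)/P)).min' (hclsne y) with hgdef
        have hg_mem : ∀ y, (g y : ℕ)/P = (y:ℕ)/P := by
          intro y
          have := Finset.min'_mem _ (hclsne y)
          simpa using this
        have hg_eq : ∀ y z : Fin n, (y:ℕ)/P = (z:ℕ)/P → g y = g z := by
          intro y z h
          have hfe : (fun z' : Fin n => (z':ℕ)/P = (y:ℕ)/P)
              = (fun z' : Fin n => (z':ℕ)/P = (z:ℕ)/P) := by
            funext w; rw [h]
          simp only [hgdef, hfe]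
        have hdivQ : ∀ y : Fin n, dX x y ≤ r → (y:ℕ) / B ^ (M - t) = (x:ℕ) / B ^ (M - t) := by
          intro y hy
          rcases eq_or_ne y x with rfl | hyx
          · rfl
          · exact ((cpf_ge_iff htM (hval x) (hval y)).mp (hball y hy hyx)).symm
        refine ⟨ball.image g, ?_, ?_⟩
        · -- cardinality bound
          have hcard := Finset.card_le_card_of_injOn (f := fun c : Fin n => (c:ℕ)/P)
            (s := ball.image g)
            (t := Finset.Ico ((x:ℕ) / B ^ (M - t) * B) ((x:ℕ) / B ^ (M - t) * B + B))
            ?_ ?_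
          · rw [Nat.card_Ico] at hcard
            simpa [hBdef] using hcard
          · intro c hc
            obtain ⟨y, hy, rfl⟩ := Finset.mem_image.mp hc
            have hyb : dX x y ≤ r := by
              simpa [hballdef] using hy
            have h1 : (y:ℕ)/P/B = (x:ℕ) / B ^ (M - t) := by
              rw [Nat.div_div_eq_div_mul, hPB]
              exact hdivQ y hyb
            simp only [Finset.coe_Ico, Set.mem_Ico]
            rw [hg_mem y]
            have h2 := Nat.div_add_mod ((y:ℕ)/P) B
            rw [h1] at h2
            have h3 := Nat.mod_lt ((y:ℕ)/P) (y := B) (by omega)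
            constructor
            · rw [mul_comm]; omega
            · rw [mul_comm ((x:ℕ)/B^(M-t)) B]; omega
          · intro c1 h1 c2 h2 hcc
            simp only [Finset.coe_image, Set.mem_image, Finset.mem_coe] at h1 h2
            obtain ⟨y1, hy1, rfl⟩ := h1
            obtain ⟨y2, hy2, rfl⟩ := h2
            dsimp only at hcc
            rw [hg_mem y1, hg_mem y2] at hcc
            exact hg_eq y1 y2 hcc
        · intro y hy
          have hyb : y ∈ ball := by simp [hballdef, hy]
          refine ⟨g y, Finset.mem_image_of_mem g hyb, ?_⟩
          rcases eq_or_ne (g y) y with he | hne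
          · rw [he]
            have h0 : dX y y = 0 := by simp [hdXdef]
            rw [h0]; linarith
          · have hcp : t + 1 ≤ cpf B M (g y : ℕ) (y : ℕ) := by
              apply le_cpf (by omega)
              have he : M - (t + 1) = M - t - 1 := by omega
              rw [he, ← hPdef]
              exact hg_mem y
            have hdgy : dX (g y) y = (2:ℝ) ^ (-(cpf B M (g y : ℕ) (y:ℕ) : ℤ)) := if_neg hne
            rw [hdgy]
            have h1 : (2:ℝ) ^ (-(cpf B M (g y : ℕ) (y:ℕ) : ℤ)) ≤ (2:ℝ) ^ (-((t:ℤ)+1)) := by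
              apply zpow_le_zpow_right₀ one_le_two
              have : (t:ℤ) + 1 ≤ (cpf B M (g y : ℕ) (y:ℕ) : ℤ) := by exact_mod_cast hcp
              omega
            have h2 : (2:ℝ) ^ (-((t:ℤ)+1)) = (2:ℝ) ^ (-(t:ℤ)) / 2 := by
              rw [show -((t:ℤ)+1) = -(t:ℤ) + (-1) by ring, zpow_add₀ (by norm_num : (2:ℝ) ≠ 0),
                zpow_neg_one, div_eq_mul_inv]
            rw [h2] at h1
            linarith
    · -- r < 0 : empty ball
      refine ⟨∅, by simp, ?_⟩
      intro y hy
      exact absurd (le_trans (hd_nonneg x y) hy) hr0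
  · -- spanner lower bound
    intro E hEsymm hEirr hspan
    have hM1 : 1 ≤ M := by omega
    set δ : ℝ := (2:ℝ) ^ (-((M - 1 : ℕ) : ℤ)) with hδdef
    have hδpos : 0 < δ := by positivity
    have hEdge : ∀ a b : Fin n, E a b → δ ≤ dX a b := by
      intro a b hab
      have hne : a ≠ b := by rintro rfl; exact hEirr a hab
      have h1 : cpf B M (a:ℕ) (b:ℕ) ≤ M - 1 := by
        have := hcp_lt a b hne; omega
      have hdab : dX a b = (2:ℝ) ^ (-(cpf B M (a:ℕ) (b:ℕ) : ℤ)) := if_neg hne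
      rw [hdab, hδdef]
      apply zpow_le_zpow_right₀ one_le_two
      have h2 : (cpf B M (a:ℕ) (b:ℕ) : ℤ) ≤ ((M - 1 : ℕ) : ℤ) := by exact_mod_cast h1
      omega
    have hforce : ∀ u v : Fin n, (u:ℕ)/B^l = (v:ℕ)/B^l →
        (u:ℕ)/B^(l-1) ≠ (v:ℕ)/B^(l-1) → E u v := by
      intro u v hdiv hdiv'
      have hne : u ≠ v := by rintro rfl; exact hdiv' rfl
      have hcp1 : M - l ≤ cpf B M (u:ℕ) (v:ℕ) := by
        apply le_cpf (by omega)
        have he : M - (M - l) = l := by omega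
        rw [he]; exact hdiv
      have hcp2 : cpf B M (u:ℕ) (v:ℕ) ≤ M - l := by
        by_contra hgt
        push_neg at hgt
        have h1 : M - l + 1 ≤ cpf B M (u:ℕ) (v:ℕ) := hgt
        have h2 := (cpf_ge_iff (t := M - l + 1) (by omega) (hval u) (hval v)).mp h1
        have he : M - (M - l + 1) = l - 1 := by omega
        rw [he] at h2
        exact hdiv' h2
      have hcpe : cpf B M (u:ℕ) (v:ℕ) = M - l := le_antisymm hcp2 hcp1
      have hduv : dX u v = (2:ℝ) ^ (-((M - l : ℕ) : ℤ)) := by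
        have h0 : dX u v = (2:ℝ) ^ (-(cpf B M (u:ℕ) (v:ℕ) : ℤ)) := if_neg hne
        rw [h0, hcpe]
      have hkey : ε * dX u v < δ := by
        rw [hduv, hδdef]
        have he1 : (-((M - 1 : ℕ) : ℤ)) = (-((M - l : ℕ) : ℤ)) + (-(((l - 1 : ℕ)) : ℤ)) := by
          omega
        have hsplit : (2:ℝ) ^ (-((M - 1 : ℕ) : ℤ))
            = (2:ℝ) ^ (-((M - l : ℕ) : ℤ)) * (2:ℝ) ^ (-(((l - 1 : ℕ)) : ℤ)) := by
          rw [he1, zpow_add₀ (by norm_num : (2:ℝ) ≠ 0)]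
        rw [hsplit]
        have hpos : (0:ℝ) < (2:ℝ) ^ (-((M - l : ℕ) : ℤ)) := by positivity
        have hεlt : ε < (2:ℝ) ^ (-(((l - 1 : ℕ)) : ℤ)) := by
          have hp : (0:ℝ) < (2:ℝ) ^ (l - 1 : ℕ) := by positivity
          have h2 : (2:ℝ) ^ (-(((l - 1 : ℕ)) : ℤ)) = ((2:ℝ) ^ (l - 1 : ℕ))⁻¹ := by
            rw [zpow_neg, zpow_natCast]
          rw [h2, show ((2:ℝ) ^ (l - 1 : ℕ))⁻¹ = 1 / 2 ^ (l - 1 : ℕ) by ring,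
            lt_div_iff₀ hp]
          linarith
        calc ε * (2:ℝ) ^ (-((M - l : ℕ) : ℤ))
            = (2:ℝ) ^ (-((M - l : ℕ) : ℤ)) * ε := by ring
        _ < (2:ℝ) ^ (-((M - l : ℕ) : ℤ)) * (2:ℝ) ^ (-(((l - 1 : ℕ)) : ℤ)) :=
            mul_lt_mul_of_pos_left hεlt hpos
      obtain ⟨p, hchain, hhead, hlast, hweight⟩ := hspan u v
      have hchain' : p.Chain' (fun a b => δ ≤ dX a b) :=
        List.IsChain.imp (fun a b hab => hEdge a b hab) hchain
      have hL := pw_ge_ultra dX δ hd_ultra p u v hchain' hhead hlast hne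
      have hdpos : 0 < dX u v := by rw [hduv]; positivity
      have hlen2 : p.length - 2 = 0 := by
        by_contra h0
        have h1 : 1 ≤ p.length - 2 := by omega
        have h2 : (1:ℝ) ≤ ((p.length - 2 : ℕ) : ℝ) := by exact_mod_cast h1
        have h3 : (1:ℝ) * δ ≤ ((p.length - 2 : ℕ) : ℝ) * δ :=
          mul_le_mul_of_nonneg_right h2 hδpos.le
        nlinarith
      cases p with
      | nil => simp at hhead
      | cons a q =>
        cases q with
        | nil =>
          exfalso
          apply hne
          have ha : a = u := by simpa using hhead
          have hb : a = v := by simpa using hlast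
          rw [← ha, ← hb]
        | cons b q' =>
          cases q' with
          | nil =>
            have ha : a = u := by simpa using hhead
            have hb : b = v := by simpa using hlast
            subst ha; subst hb
            exact List.isChain_pair.mp hchain
          | cons c q'' =>
            exfalso
            simp only [List.length_cons] at hlen2
            omega
    -- counting
    have hset : {q : Fin n × Fin n | E q.1 q.2}
        = ↑(Finset.univ.filter (fun q : Fin n × Fin n => E q.1 q.2)) := by
      ext q; simp
    rw [hset, Set.ncard_coe_finset]
    set T : Finset (Fin n × Fin n) := Finset.univ.filter (fun q : Fin n × Fin n => E q.1 q.2)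
      with hTdef
    set K : ℕ := n / B ^ l with hKdef
    have hBlpos : 0 < B ^ l := Nat.pow_pos hB0
    have hBl1pos : 0 < B ^ (l-1) := Nat.pow_pos hB0
    have hKBl : K * B ^ l ≤ n := Nat.div_mul_le_self n (B ^ l)
    have hBB' : B ^ (l-1) * B = B ^ l := by
      rw [← pow_succ]; congr 1; omega
    set D : Finset (ℕ × ℕ × ℕ) :=
      (Finset.range (K * B ^ l)) ×ˢ ((Finset.range (B - 1)) ×ˢ (Finset.range (B ^ (l-1))))
      with hDdef
    set vv : ℕ × ℕ × ℕ → ℕ := fun x =>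
      (x.1 / B ^ l) * B ^ l + (((x.1 / B ^ (l-1)) % B + 1 + x.2.1) % B) * B ^ (l-1) + x.2.2
      with hvvdef
    have hmemD : ∀ x : ℕ × ℕ × ℕ, x ∈ D ↔
        x.1 < K * B ^ l ∧ x.2.1 < B - 1 ∧ x.2.2 < B ^ (l-1) := by
      intro x
      simp [hDdef, Finset.mem_product]
    have hprops : ∀ x : ℕ × ℕ × ℕ, x ∈ D →
        x.1 < n ∧ vv x < n ∧ vv x / B ^ l = x.1 / B ^ l
          ∧ vv x / B ^ (l-1) = B * (x.1 / B ^ l) + ((x.1 / B ^ (l-1)) % B + 1 + x.2.1) % B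
          ∧ x.1 / B ^ (l-1) = B * (x.1 / B ^ l) + (x.1 / B ^ (l-1)) % B
          ∧ vv x % B ^ (l-1) = x.2.2
          ∧ (x.1 / B ^ (l-1)) % B ≠ ((x.1 / B ^ (l-1)) % B + 1 + x.2.1) % B := by
      rintro ⟨u, w1, w2⟩ hx
      rw [hmemD] at hx
      obtain ⟨hu, hw1, hw2⟩ := hx
      dsimp only at hu hw1 hw2 ⊢
      set q := u / B ^ l with hq
      set a := (u / B ^ (l-1)) % B with ha
      set a' := (a + 1 + w1) % B with ha'
      have haB : a < B := Nat.mod_lt _ (by omega)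
      have ha'B : a' < B := Nat.mod_lt _ (by omega)
      have hulon : u < n := lt_of_lt_of_le hu hKBl
      have ho : a' * B ^ (l-1) + w2 < B ^ l := by
        have h1 : a' * B ^ (l-1) + w2 < (a' + 1) * B ^ (l-1) := by
          rw [add_mul, one_mul]; omega
        have h2 : (a' + 1) * B ^ (l-1) ≤ B * B ^ (l-1) :=
          Nat.mul_le_mul_right _ (by omega)
        rw [mul_comm B (B ^ (l-1)), hBB'] at h2
        omega
      have he : vv (u, w1, w2) = B ^ (l-1) * (B * q + a') + w2 := by
        rw [hvvdef]
        dsimp only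
        rw [← ha, ← ha', ← hq, ← hBB']
        ring
      have he2 : vv (u, w1, w2) = B ^ l * q + (a' * B ^ (l-1) + w2) := by
        rw [hvvdef]; dsimp only; rw [← ha, ← ha', ← hq]; ring
      have hqK : q < K := (Nat.div_lt_iff_lt_mul hBlpos).mpr hu
      have hvlt : vv (u, w1, w2) < n := by
        have h1 : vv (u, w1, w2) < B ^ l * (q + 1) := by
          rw [he2, mul_add, mul_one]; omega
        have h2 : B ^ l * (q + 1) ≤ B ^ l * K := Nat.mul_le_mul_left _ (by omega)
        have h3 : B ^ l * K ≤ n := by rw [mul_comm]; exact hKBl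
        omega
      have hdivl : vv (u, w1, w2) / B ^ l = q := by
        rw [he2, Nat.mul_add_div hBlpos, Nat.div_eq_of_lt ho, add_zero]
      have hdivl1 : vv (u, w1, w2) / B ^ (l-1) = B * q + a' := by
        rw [he, Nat.mul_add_div hBl1pos, Nat.div_eq_of_lt hw2, add_zero]
      have hmod : vv (u, w1, w2) % B ^ (l-1) = w2 := by
        rw [he, Nat.mul_add_mod, Nat.mod_eq_of_lt hw2]
      have hudivl1 : u / B ^ (l-1) = B * q + a := by
        have h1 := Nat.div_add_mod (u / B ^ (l-1)) B
        have h2 : u / B ^ (l-1) / B = q := by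
          rw [Nat.div_div_eq_div_mul, hBB']
        rw [h2, ← ha] at h1
        omega
      have hane : a ≠ a' := by
        intro heq
        have haa : a % B = a := Nat.mod_eq_of_lt haB
        have hmeq : (a + 1 + w1) % B = a % B := by rw [← ha', ← heq, haa]
        have hdvd : B ∣ (a + 1 + w1) - a :=
          (Nat.modEq_iff_dvd' (by omega)).mp hmeq.symm
        have : (a + 1 + w1) - a = 1 + w1 := by omega
        rw [this] at hdvd
        have := Nat.le_of_dvd (by omega) hdvd
        omega
      exact ⟨hulon, hvlt, by rw [hdivl], by rw [hdivl1], hudivl1, hmod, hane⟩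
    set f : ℕ × ℕ × ℕ → Fin n × Fin n := fun x =>
      (⟨x.1 % n, Nat.mod_lt _ hn0⟩, ⟨vv x % n, Nat.mod_lt _ hn0⟩) with hfdef
    have hmaps : ∀ x ∈ D, f x ∈ T := by
      intro x hx
      obtain ⟨hun, hvn, hdl, hdl1, hudl1, hmod, hane⟩ := hprops x hx
      have hu_mod : x.1 % n = x.1 := Nat.mod_eq_of_lt hun
      have hv_mod : vv x % n = vv x := Nat.mod_eq_of_lt hvn
      have hE : E (f x).1 (f x).2 := by
        apply hforce
        · show (x.1 % n) / B ^ l = (vv x % n) / B ^ l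
          rw [hu_mod, hv_mod, hdl]
        · show (x.1 % n) / B ^ (l-1) ≠ (vv x % n) / B ^ (l-1)
          rw [hu_mod, hv_mod]
          intro hcontra
          apply hane
          rw [hudl1, hdl1] at hcontra
          omega
      simp [hTdef]
      exact hE
    have hinj : Set.InjOn f ↑D := by
      rintro ⟨u, w1, w2⟩ hx ⟨u', w1', w2'⟩ hy heq
      rw [Finset.mem_coe] at hx hy
      obtain ⟨hun, hvn, hdl, hdl1, hudl1, hmod, hane⟩ := hprops _ hx
      obtain ⟨hun', hvn', hdl', hdl1', hudl1', hmod', hane'⟩ := hprops _ hy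
      have hun2 : u < n := hun
      have hun2' : u' < n := hun'
      have hvn2 : vv (u, w1, w2) < n := hvn
      have hvn2' : vv (u', w1', w2') < n := hvn'
      rw [hmemD] at hx hy
      have hxw1 : w1 < B - 1 := hx.2.1
      have hyw1 : w1' < B - 1 := hy.2.1
      simp only [hfdef, Prod.mk.injEq, Fin.mk.injEq] at heq
      have h1' : u % n = u' % n := heq.1
      have h2' : vv (u, w1, w2) % n = vv (u', w1', w2') % n := heq.2
      rw [Nat.mod_eq_of_lt hun2, Nat.mod_eq_of_lt hun2'] at h1'
      rw [Nat.mod_eq_of_lt hvn2, Nat.mod_eq_of_lt hvn2'] at h2'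
      subst h1'
      have t1 : vv (u, w1, w2) % B ^ (l-1) = w2 := hmod
      have t2 : vv (u, w1', w2') % B ^ (l-1) = w2' := hmod'
      have hw2 : w2 = w2' := by rw [← t1, ← t2, h2']
      have t3 : vv (u, w1, w2) / B ^ (l-1)
          = B * (u / B ^ l) + ((u / B ^ (l-1)) % B + 1 + w1) % B := hdl1
      have t4 : vv (u, w1', w2') / B ^ (l-1)
          = B * (u / B ^ l) + ((u / B ^ (l-1)) % B + 1 + w1') % B := hdl1'
      rw [h2'] at t3
      have ha2 : ((u / B ^ (l-1)) % B + 1 + w1) % B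
          = ((u / B ^ (l-1)) % B + 1 + w1') % B := by omega
      have hmeq : Nat.ModEq B ((u / B ^ (l-1)) % B + 1 + w1)
          ((u / B ^ (l-1)) % B + 1 + w1') := ha2
      have hcan : Nat.ModEq B w1 w1' := Nat.ModEq.add_left_cancel' _ hmeq
      have hw1 : w1 = w1' := by
        have hx1 : w1 % B = w1 := Nat.mod_eq_of_lt (by omega)
        have hy1 : w1' % B = w1' := Nat.mod_eq_of_lt (by omega)
        rwa [Nat.ModEq, hx1, hy1] at hcan
      rw [hw1, hw2]
    have hDT : D.card ≤ T.card := Finset.card_le_card_of_injOn f hmaps hinj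
    have hDcard : D.card = (K * B ^ l) * ((B - 1) * B ^ (l-1)) := by
      simp [hDdef]
    -- real arithmetic
    have hnlt : n < B ^ l * K + B ^ l := by
      have h1 := Nat.div_add_mod n (B ^ l)
      have h2 : n % B ^ l < B ^ l := Nat.mod_lt _ (by omega)
      rw [← hKdef] at h1
      omega
    have hn2 : (n:ℝ) / 2 ≤ ((K * B ^ l : ℕ) : ℝ) := by
      have h1 : ((n:ℕ):ℝ) < ((B ^ l * K + B ^ l : ℕ):ℝ) := by exact_mod_cast hnlt
      push_cast at h1 ⊢
      push_cast at hBl_half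
      linarith
    have hby : ((B ^ l : ℕ):ℝ) / 2 ≤ (((B - 1) * B ^ (l-1) : ℕ) : ℝ) := by
      have hc1 : ((B ^ l : ℕ):ℝ) = (B:ℝ) * ((B ^ (l-1) : ℕ):ℝ) := by
        push_cast
        rw [← pow_succ']
        congr 1
        omega
      have hc2 : (((B - 1) * B ^ (l-1) : ℕ) : ℝ) = ((B:ℝ) - 1) * ((B ^ (l-1) : ℕ):ℝ) := by
        push_cast [Nat.cast_sub (by omega : 1 ≤ B)]
        ring
      have hB2R : (2:ℝ) ≤ (B:ℝ) := by exact_mod_cast hB2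
      have hp : (0:ℝ) ≤ ((B ^ (l-1) : ℕ):ℝ) := by positivity
      rw [hc1, hc2]
      have hkey : (0:ℝ) ≤ ((B:ℝ) - 2) * ((B ^ (l-1) : ℕ):ℝ) :=
        mul_nonneg (by linarith) hp
      nlinarith [hkey]
    have hTR : ((D.card : ℕ) : ℝ) ≤ ((T.card : ℕ) : ℝ) := Nat.cast_le.mpr hDT
    rw [hDcard] at hTR
    have hcast : (((K * B ^ l) * ((B - 1) * B ^ (l-1)) : ℕ) : ℝ)
        = ((K * B ^ l : ℕ) : ℝ) * (((B - 1) * B ^ (l-1) : ℕ) : ℝ) := by push_cast; ring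
    rw [hcast] at hTR
    have hq1 : (0:ℝ) ≤ ((B ^ l : ℕ):ℝ) / 2 := by positivity
    have hq2 : (0:ℝ) ≤ ((K * B ^ l : ℕ) : ℝ) := by positivity
    have hmul : (n:ℝ) / 2 * (((B ^ l : ℕ):ℝ) / 2)
        ≤ ((K * B ^ l : ℕ) : ℝ) * (((B - 1) * B ^ (l-1) : ℕ) : ℝ) :=
      mul_le_mul hn2 hby hq1 hq2
    have hfin : 1 / 4 * (n:ℝ) * ε⁻¹ ^ d ≤ (n:ℝ) / 2 * (((B ^ l : ℕ):ℝ) / 2) := by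
      have h1 : 1 / 4 * (n:ℝ) * ε⁻¹ ^ d ≤ 1 / 4 * (n:ℝ) * ((B ^ l : ℕ):ℝ) := by
        apply mul_le_mul_of_nonneg_left hinv_pow (by positivity)
      linarith
    linarith
end

section
/- In the metric space X of n = (2^d)^L leaves of the labeled perfect 2^d-ary tree, the Hamiltonian path P_X visiting the leaves in left-to-right order has weight w(P_X) = (2^d − 1)·n^{1/d}·Σ_{i=0}^{L−1} (2^{d−1})^i, where L = (log₂ n)/d. In particular, for d = 1, w(P_X) = n·log₂ n. -/
open Finset


-- maximal power of b dividing m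
noncomputable def tVal (b m : ℕ) : ℕ := sInf {k | ¬ b ^ (k + 1) ∣ m}

lemma tVal_spec (b m : ℕ) (hb : 2 ≤ b) (hm : 0 < m) :
    b ^ (tVal b m) ∣ m ∧ ¬ b ^ (tVal b m + 1) ∣ m := by
  have hne : {k | ¬ b ^ (k + 1) ∣ m}.Nonempty := by
    refine ⟨m, fun hdvd => ?_⟩
    have h1 : b ^ (m + 1) ≤ m := Nat.le_of_dvd hm hdvd
    have h2 : m < 2 ^ (m + 1) := by
      calc m < m + 1 := Nat.lt_succ_self m
        _ < 2 ^ (m + 1) := Nat.lt_two_pow_self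
    have h3 : 2 ^ (m + 1) ≤ b ^ (m + 1) := Nat.pow_le_pow_left hb _
    omega
  constructor
  · rcases Nat.eq_zero_or_pos (tVal b m) with h0 | h0
    · simp [h0]
    · have : tVal b m - 1 ∉ {k | ¬ b ^ (k + 1) ∣ m} :=
        Nat.notMem_of_lt_sInf (Nat.sub_lt h0 one_pos)
      simpa [Set.mem_setOf_eq, Nat.sub_add_cancel h0, not_not] using this
  · exact Nat.sInf_mem hne

lemma tVal_dvd_iff (b m : ℕ) (hb : 2 ≤ b) (hm : 0 < m) (i : ℕ) :
    b ^ i ∣ m ↔ i ≤ tVal b m := by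
  obtain ⟨h1, h2⟩ := tVal_spec b m hb hm
  constructor
  · intro hdvd
    by_contra hlt
    exact h2 (dvd_trans (pow_dvd_pow b (by omega)) hdvd)
  · intro hle
    exact dvd_trans (pow_dvd_pow b hle) h1

lemma tVal_lt (b m L : ℕ) (hb : 2 ≤ b) (hm : 0 < m) (hmL : m < b ^ L) :
    tVal b m < L := by
  obtain ⟨h1, _⟩ := tVal_spec b m hb hm
  have := Nat.le_of_dvd hm h1
  by_contra hge
  have : b ^ L ≤ b ^ (tVal b m) := Nat.pow_le_pow_right (by omega) (by omega)
  omega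

-- division lemmas
lemma div_pred_eq_of_not_dvd {k m : ℕ} (hm : 0 < m) (h : ¬ k ∣ m) :
    (m - 1) / k = m / k := by
  have := Nat.succ_div (a := m - 1) (b := k)
  rw [Nat.sub_add_cancel hm] at this
  simp [h] at this
  omega

lemma div_pred_eq_of_dvd {k m : ℕ} (hm : 0 < m) (h : k ∣ m) :
    (m - 1) / k = m / k - 1 := by
  have h2 := Nat.succ_div (a := m - 1) (b := k)
  rw [Nat.sub_add_cancel hm, if_pos h] at h2
  rw [h2, Nat.add_sub_cancel]



/-- The `j`-th leaf of the perfect `2^d`-ary tree of depth `L` in left-to-right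
order: the base-`2^d` digits of `j`, most significant first. -/
def leafOf (d L : ℕ) (j : ℕ) : Fin L → Fin (2 ^ d) :=
  fun i => ⟨j / (2 ^ d) ^ (L - 1 - (i : ℕ)) % 2 ^ d, Nat.mod_lt _ (by positivity)⟩

section
variable (d L : ℕ) (hd : 1 ≤ d)

lemma two_le_b (hd : 1 ≤ d) : 2 ≤ 2^d :=
  calc 2 = 2^1 := (pow_one 2).symm
  _ ≤ 2^d := Nat.pow_le_pow_right (by norm_num) hd

lemma digit_eq_of_gt (hd : 1 ≤ d) (m : ℕ) (hm : 0 < m) (s : ℕ) (hs : tVal (2^d) m < s) :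
    (m - 1) / (2^d)^s % 2^d = m / (2^d)^s % 2^d := by
  have hb := two_le_b d hd
  have hnd : ¬ (2^d)^s ∣ m := by
    intro hdvd
    exact (tVal_spec (2^d) m hb hm).2
      (dvd_trans (pow_dvd_pow (2^d) (by omega)) hdvd)
  rw [div_pred_eq_of_not_dvd hm hnd]

lemma digit_ne_at (hd : 1 ≤ d) (m : ℕ) (hm : 0 < m) :
    (m - 1) / (2^d)^(tVal (2^d) m) % 2^d ≠ m / (2^d)^(tVal (2^d) m) % 2^d := by
  have hb := two_le_b d hd
  set b := 2^d with hbdef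
  set t := tVal b m with htdef
  obtain ⟨h1, h2⟩ := tVal_spec b m hb hm
  set c := m / b^t with hcdef
  have hmc : b^t * c = m := Nat.mul_div_cancel' h1
  have hc : 0 < c := by
    rcases Nat.eq_zero_or_pos c with h0 | h0
    · rw [h0, Nat.mul_zero] at hmc; omega
    · exact h0
  have hbc : ¬ b ∣ c := by
    intro ⟨e, he⟩
    exact h2 ⟨e, by rw [pow_succ, mul_assoc, ← he, hmc]⟩
  have hcr : 0 < c % b := Nat.pos_of_ne_zero (fun h0 => hbc (Nat.dvd_of_mod_eq_zero h0))
  have hrlt : c % b < b := Nat.mod_lt c (by omega)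
  rw [div_pred_eq_of_dvd hm h1, ← hcdef]
  have hdm := Nat.div_add_mod c b
  have hrep : c - 1 = b * (c / b) + (c % b - 1) := by omega
  rw [hrep, Nat.mul_add_mod, Nat.mod_eq_of_lt (by omega)]
  omega

lemma leafOf_apply (j : ℕ) (i : Fin L) :
    (leafOf d L j i : ℕ) = j / (2^d)^(L - 1 - (i : ℕ)) % 2^d := rfl

lemma firstDiff_consec (hd : 1 ≤ d) (m : ℕ) (hm : 0 < m) (hmL : m < (2^d)^L) :
    firstDiff d L (leafOf d L (m - 1)) (leafOf d L m) = L - 1 - tVal (2^d) m := by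
  have hb := two_le_b d hd
  have hL : 1 ≤ L := by
    by_contra h0
    push_neg at h0
    interval_cases L
    simp at hmL
    omega
  set t := tVal (2^d) m with htdef
  have htL : t < L := tVal_lt (2^d) m L hb hm hmL
  set i0 := L - 1 - t with hi0def
  have hsi0 : L - 1 - i0 = t := by omega
  have hi0L : i0 < L := by omega
  have hmem : i0 ∈ {i | ∃ hi : i < L, leafOf d L (m-1) ⟨i, hi⟩ ≠ leafOf d L m ⟨i, hi⟩} := by
    refine ⟨hi0L, ?_⟩
    intro heq
    have := congrArg Fin.val heq
    rw [leafOf_apply, leafOf_apply] at this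
    simp only [hsi0] at this
    exact digit_ne_at d hd m hm this
  apply le_antisymm
  · exact Nat.sInf_le hmem
  · apply le_csInf ⟨i0, hmem⟩
    intro x hx
    obtain ⟨hxL, hne⟩ := hx
    by_contra hlt
    push_neg at hlt
    apply hne
    apply Fin.ext
    rw [leafOf_apply, leafOf_apply]
    simp only [Fin.val_mk]
    exact digit_eq_of_gt d hd m hm (L - 1 - x) (by omega)

lemma treeDist_consec (hd : 1 ≤ d) (m : ℕ) (hm : 0 < m) (hmL : m < (2^d)^L) :
    treeDist d L (leafOf d L (m - 1)) (leafOf d L m) = 2 ^ (tVal (2^d) m + 1) := by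
  have hb := two_le_b d hd
  have htL : tVal (2^d) m < L := tVal_lt (2^d) m L hb hm hmL
  have hne : leafOf d L (m - 1) ≠ leafOf d L m := by
    intro heq
    have := congrArg Fin.val (congrFun heq ⟨L - 1 - tVal (2^d) m, by omega⟩)
    rw [leafOf_apply, leafOf_apply] at this
    simp only [show L - 1 - (L - 1 - tVal (2^d) m) = tVal (2^d) m by omega] at this
    exact digit_ne_at d hd m hm this
  rw [treeDist, if_neg hne, firstDiff_consec d L hd m hm hmL]
  congr 1
  omega

end

lemma geom_two_sum (k : ℕ) : ∑ i ∈ Finset.range k, (2:ℝ)^i = 2^k - 1 := by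
  have h := geom_sum_mul (2:ℝ) k
  norm_num at h
  exact h

lemma treeDist_sum_form (d L : ℕ) (hd : 1 ≤ d) (m : ℕ) (hm : 0 < m)
    (hmL : m < (2^d)^L) :
    treeDist d L (leafOf d L (m - 1)) (leafOf d L m)
      = 1 + ∑ i ∈ Finset.range L, (if (2^d)^i ∣ m then (2:ℝ)^i else 0) := by
  have hb := two_le_b d hd
  set t := tVal (2^d) m with htdef
  have htL : t < L := tVal_lt (2^d) m L hb hm hmL
  rw [treeDist_consec d L hd m hm hmL]
  have h1 : ∀ i ∈ Finset.range L,
      (if (2^d)^i ∣ m then (2:ℝ)^i else 0) = if i < t + 1 then (2:ℝ)^i else 0 := by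
    intro i _
    have hiff : ((2^d)^i ∣ m) ↔ (i < t + 1) := by
      rw [tVal_dvd_iff (2^d) m hb hm i, ← htdef]; omega
    simp [hiff]
  rw [Finset.sum_congr rfl h1, ← Finset.sum_filter]
  have h2 : (Finset.range L).filter (· < t + 1) = Finset.range (t + 1) := by
    ext x; simp; omega
  rw [h2, geom_two_sum]
  ring

lemma count_dvd (N k : ℕ) (c : ℝ) :
    ∑ j ∈ Finset.range N, (if k ∣ (j + 1) then c else 0) = (N / k : ℕ) * c := by
  have h1 : ∑ m ∈ Finset.Ioc 0 N, (if k ∣ m then c else 0)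
      = ∑ j ∈ Finset.range N, (if k ∣ (j + 1) then c else 0) := by
    rw [show Finset.Ioc 0 N = Finset.Ico 1 (N + 1) from by ext x; simp; omega,
      Finset.sum_Ico_eq_sum_range]
    simp [Nat.add_comm]
  rw [← h1, ← Finset.sum_filter, Finset.sum_const, Nat.Ioc_filter_dvd_card_eq_div]
  simp [nsmul_eq_mul]

lemma div_eval (d L i : ℕ) (hd : 1 ≤ d) (hi : i < L) :
    ((2^d)^L - 1) / (2^d)^i = (2^d)^(L - i) - 1 := by
  have hb := two_le_b d hd
  have hpos : 0 < (2^d)^i := by positivity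
  have hpos2 : 0 < (2^d)^(L - i) := by positivity
  have hsplit : (2^d)^L = (2^d)^i * (2^d)^(L - i) := by
    rw [← pow_add]; congr 1; omega
  have hrep : (2^d)^L - 1 = (2^d)^i * ((2^d)^(L - i) - 1) + ((2^d)^i - 1) := by
    have e1 : (2^d)^i * ((2^d)^(L - i) - 1) + (2^d)^i = (2^d)^i * (2^d)^(L - i) := by
      rw [← Nat.mul_succ]; congr 1; omega
    omega
  rw [hrep, Nat.mul_add_div hpos, Nat.div_eq_of_lt (by omega), Nat.add_zero]

lemma alg (d : ℕ) (hd : 1 ≤ d) : ∀ L : ℕ,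
    (((2:ℝ)^d)^L - 2^L) + ∑ i ∈ Finset.range L, (2:ℝ)^i * ((2:ℝ)^d)^(L - i)
      = ((2:ℝ)^d - 1) * 2^L * ∑ i ∈ Finset.range L, ((2:ℝ)^(d-1))^i := by
  have hp : (2:ℝ)^d = 2 * 2^(d-1) := by
    rw [← pow_succ']; congr 1; omega
  intro L
  induction L with
  | zero => simp
  | succ L IH =>
    have hshift : ∀ i ∈ Finset.range L,
        (2:ℝ)^i * ((2:ℝ)^d)^(L + 1 - i) = ((2:ℝ)^i * ((2:ℝ)^d)^(L - i)) * (2:ℝ)^d := by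
      intro i hi
      rw [Finset.mem_range] at hi
      rw [show L + 1 - i = (L - i) + 1 by omega, pow_succ]
      ring
    rw [Finset.sum_range_succ, Finset.sum_range_succ (f := fun i => ((2:ℝ)^(d-1))^i),
      Finset.sum_congr rfl hshift, ← Finset.sum_mul]
    simp only [hp] at IH ⊢
    rw [show L + 1 - L = 1 by omega]
    have hG := geom_sum_mul ((2:ℝ)^(d-1)) L
    linear_combination (2 * (2:ℝ)^(d-1)) * IH
      + (2 * (2 * (2:ℝ)^(d-1) - 1) * (2:ℝ)^L) * hG


/-- the left-to-right Hamiltonian path on the `n = (2^d)^L` leaves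
has weight `(2^d − 1) · n^(1/d) · Σ_{i<L} (2^(d−1))^i` (note `n^(1/d) = 2^L`);
in particular for `d = 1` the weight is `n·log₂ n = 2^L·L`. -/
theorem stmt10 (d L : ℕ) (hd : 1 ≤ d) (hL : 1 ≤ L) :
    (∑ j ∈ Finset.range ((2 ^ d) ^ L - 1),
        treeDist d L (leafOf d L j) (leafOf d L (j + 1))) =
      ((2 : ℝ) ^ d - 1) * 2 ^ L * ∑ i ∈ Finset.range L, ((2 : ℝ) ^ (d - 1)) ^ i ∧
    (d = 1 →
      (∑ j ∈ Finset.range ((2 ^ d) ^ L - 1),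
          treeDist d L (leafOf d L j) (leafOf d L (j + 1))) = (2 : ℝ) ^ L * L) := by
  have hb := two_le_b d hd
  have hn : 1 ≤ (2^d)^L := Nat.one_le_pow _ _ (by positivity)
  set N := (2^d)^L - 1 with hN
  have main : (∑ j ∈ Finset.range N, treeDist d L (leafOf d L j) (leafOf d L (j + 1)))
      = ((2:ℝ)^d - 1) * 2^L * ∑ i ∈ Finset.range L, ((2:ℝ)^(d-1))^i := by
    have hterm : ∀ j ∈ Finset.range N,
        treeDist d L (leafOf d L j) (leafOf d L (j + 1))
          = 1 + ∑ i ∈ Finset.range L, (if (2^d)^i ∣ (j + 1) then (2:ℝ)^i else 0) := by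
      intro j hj
      rw [Finset.mem_range] at hj
      have := treeDist_sum_form d L hd (j + 1) (by omega) (by omega)
      simpa using this
    rw [Finset.sum_congr rfl hterm, Finset.sum_add_distrib, Finset.sum_const,
      Finset.card_range, Finset.sum_comm]
    have hinner : ∀ i ∈ Finset.range L,
        (∑ j ∈ Finset.range N, if (2^d)^i ∣ (j + 1) then (2:ℝ)^i else 0)
          = (2:ℝ)^i * ((((2:ℝ)^d))^(L - i) - 1) := by
      intro i hi
      rw [Finset.mem_range] at hi
      rw [count_dvd N ((2^d)^i) ((2:ℝ)^i), hN, div_eval d L i hd hi]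
      have hpos : 1 ≤ (2^d)^(L - i) := Nat.one_le_pow _ _ (by positivity)
      rw [Nat.cast_sub hpos]
      push_cast
      ring
    rw [Finset.sum_congr rfl hinner]
    have hc1 : ((N : ℕ) : ℝ) = ((2:ℝ)^d)^L - 1 := by
      rw [hN, Nat.cast_sub hn]; push_cast; ring
    have halg := alg d hd L
    have hg := geom_two_sum L
    have hsplit : ∑ i ∈ Finset.range L, (2:ℝ)^i * (((2:ℝ)^d)^(L - i) - 1)
        = (∑ i ∈ Finset.range L, (2:ℝ)^i * ((2:ℝ)^d)^(L - i))
          - ∑ i ∈ Finset.range L, (2:ℝ)^i := by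
      rw [← Finset.sum_sub_distrib]
      congr 1; ext i; ring
    simp only [nsmul_eq_mul, mul_one]
    rw [hsplit, hc1]
    linarith [halg, hg]
  refine ⟨main, fun h1 => ?_⟩
  subst h1
  rw [main]
  norm_num
end

section
/- For the n-point metric space X of leaves of the labeled perfect 2^d-ary tree with d ≥ 2, the minimum spanning tree of X has weight at most 4n. -/
open Classical in
/-- The total weight of the graph `(X,E)` with edge weights equal to distances
(each ordered pair counted once after dividing by 2). -/
noncomputable def graphWeight {X : Type*} [Fintype X] (dX : X → X → ℝ)
    (E : X → X → Prop) : ℝ :=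
  (∑ u, ∑ v, if E u v then dX u v else 0) / 2

namespace Stmt12Aux

open Classical

variable (d L : ℕ)

/-- The leaves, encoded as numbers. -/
noncomputable def ee : (Fin L → Fin (2 ^ d)) ≃ Fin ((2 ^ d) ^ L) := finFunctionFinEquiv

/-- Numeric value of a leaf. -/
noncomputable def NN (u : Fin L → Fin (2 ^ d)) : ℕ := (ee d L u : ℕ)

lemma NN_lt (u : Fin L → Fin (2 ^ d)) : NN d L u < (2 ^ d) ^ L := (ee d L u).isLt

lemma NN_inj {u v : Fin L → Fin (2 ^ d)} (h : NN d L u = NN d L v) : u = v :=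
  (ee d L).injective (Fin.ext h)

/-- The root leaf (all zeros). -/
noncomputable def zz : Fin L → Fin (2 ^ d) :=
  (ee d L).symm ⟨0, by positivity⟩

lemma NN_zz : NN d L (zz d L) = 0 := by
  simp [NN, zz]

lemma eq_zz_iff (u : Fin L → Fin (2 ^ d)) : u = zz d L ↔ NN d L u = 0 := by
  constructor
  · rintro rfl; exact NN_zz d L
  · intro h; exact NN_inj d L (h.trans (NN_zz d L).symm)

/-- Parent of a leaf: zero out the most significant nonzero digit. -/
noncomputable def PP (u : Fin L → Fin (2 ^ d)) : Fin L → Fin (2 ^ d) :=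
  (ee d L).symm ⟨NN d L u % (2 ^ d) ^ Nat.log (2 ^ d) (NN d L u),
    lt_of_le_of_lt (Nat.mod_le _ _) (NN_lt d L u)⟩

lemma NN_PP (u : Fin L → Fin (2 ^ d)) :
    NN d L (PP d L u) = NN d L u % (2 ^ d) ^ Nat.log (2 ^ d) (NN d L u) := by
  simp [NN, PP]

lemma NN_PP_lt {u : Fin L → Fin (2 ^ d)} (hu : u ≠ zz d L) :
    NN d L (PP d L u) < NN d L u := by
  have h0 : NN d L u ≠ 0 := fun h => hu ((eq_zz_iff d L u).2 h)
  rw [NN_PP]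
  exact lt_of_lt_of_le (Nat.mod_lt _ (by positivity)) (Nat.pow_log_le_self _ h0)

lemma PP_ne {u : Fin L → Fin (2 ^ d)} (hu : u ≠ zz d L) : PP d L u ≠ u :=
  fun h => absurd (congrArg (NN d L) h) (Nat.ne_of_lt (NN_PP_lt d L hu))

lemma PP_zz : PP d L (zz d L) = zz d L := by
  apply NN_inj
  rw [NN_PP, NN_zz]
  simp

lemma coord (u : Fin L → Fin (2 ^ d)) (i : Fin L) :
    (u i : ℕ) = NN d L u / (2 ^ d) ^ (i : ℕ) % 2 ^ d := by
  conv_lhs => rw [← (ee d L).symm_apply_apply u]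
  rw [NN]
  simp [ee, finFunctionFinEquiv]

lemma firstDiff_PP {u : Fin L → Fin (2 ^ d)} (hu : u ≠ zz d L) :
    firstDiff d L u (PP d L u) = Nat.log (2 ^ d) (NN d L u) := by
  have h0 : NN d L u ≠ 0 := fun h => hu ((eq_zz_iff d L u).2 h)
  have hm1 : 1 < 2 ^ d := by
    by_contra h
    have h0' : 0 < 2 ^ d := by positivity
    have h1 : 2 ^ d = 1 := by omega
    have := NN_lt d L u
    rw [h1, one_pow] at this
    omega
  have hkL : Nat.log (2 ^ d) (NN d L u) < L := Nat.log_lt_of_lt_pow h0 (NN_lt d L u)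
  have hset : {i | ∃ hi : i < L, u ⟨i, hi⟩ ≠ PP d L u ⟨i, hi⟩}
      = {Nat.log (2 ^ d) (NN d L u)} := by
    ext i
    simp only [Set.mem_setOf_eq, Set.mem_singleton_iff]
    constructor
    · rintro ⟨hi, hne⟩
      by_contra hik
      apply hne
      apply Fin.ext
      rw [coord d L u ⟨i, hi⟩, coord d L (PP d L u) ⟨i, hi⟩]
      rcases lt_or_gt_of_ne hik with hlt | hgt
      · -- i < log : digits agree below the leading digit
        rw [NN_PP]
        have hsplit : (2 ^ d) ^ Nat.log (2 ^ d) (NN d L u)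
            = (2 ^ d) ^ i * (2 ^ d) ^ (Nat.log (2 ^ d) (NN d L u) - i) := by
          rw [← pow_add]; congr 1; omega
        rw [hsplit, Nat.mod_mul_right_div_self,
          Nat.mod_mod_of_dvd _ (dvd_pow_self (2 ^ d)
            (by omega : Nat.log (2 ^ d) (NN d L u) - i ≠ 0))]
      · -- i > log : both digits are 0
        have hub : NN d L u < (2 ^ d) ^ i :=
          lt_of_lt_of_le (Nat.lt_pow_succ_log_self hm1 _)
            (Nat.pow_le_pow_right (by omega) (by omega))
        rw [Nat.div_eq_of_lt hub,
          Nat.div_eq_of_lt (lt_trans (NN_PP_lt d L hu) hub)]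
    · rintro rfl
      refine ⟨hkL, ?_⟩
      rw [Fin.ne_iff_vne, coord d L u _, coord d L (PP d L u) _]
      have hp0 : NN d L (PP d L u) / (2 ^ d) ^ Nat.log (2 ^ d) (NN d L u) = 0 :=
        Nat.div_eq_of_lt (by rw [NN_PP]; exact Nat.mod_lt _ (by positivity))
      have hu1 : 1 ≤ NN d L u / (2 ^ d) ^ Nat.log (2 ^ d) (NN d L u) := by
        rw [Nat.le_div_iff_mul_le (by positivity), one_mul]
        exact Nat.pow_log_le_self _ h0
      have hub : NN d L u / (2 ^ d) ^ Nat.log (2 ^ d) (NN d L u) < 2 ^ d := by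
        rw [Nat.div_lt_iff_lt_mul (by positivity), ← pow_succ']
        exact Nat.lt_pow_succ_log_self hm1 _
      rw [hp0, Nat.mod_eq_of_lt hub]
      simp only [Nat.zero_mod]
      omega
  rw [firstDiff, hset, csInf_singleton]

lemma treeDist_PP {u : Fin L → Fin (2 ^ d)} (hu : u ≠ zz d L) :
    treeDist d L u (PP d L u) = 2 ^ (L - Nat.log (2 ^ d) (NN d L u)) := by
  rw [treeDist, if_neg (fun h => PP_ne d L hu h.symm), firstDiff_PP d L hu]

lemma treeDist_symm (u v : Fin L → Fin (2 ^ d)) :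
    treeDist d L u v = treeDist d L v u := by
  unfold treeDist firstDiff
  have hs : {i | ∃ hi : i < L, u ⟨i, hi⟩ ≠ v ⟨i, hi⟩} =
      {i | ∃ hi : i < L, v ⟨i, hi⟩ ≠ u ⟨i, hi⟩} := by
    ext i; exact exists_congr fun hi => ne_comm
  rw [hs]
  by_cases h : u = v
  · rw [if_pos h, if_pos h.symm]
  · rw [if_neg h, if_neg (Ne.symm h)]

/-- The spanning tree graph. -/
noncomputable def GG : SimpleGraph (Fin L → Fin (2 ^ d)) where
  Adj u v := u ≠ v ∧ (v = PP d L u ∨ u = PP d L v)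
  symm := ⟨fun u v h => ⟨h.1.symm, h.2.symm⟩⟩
  loopless := ⟨fun u h => h.1 rfl⟩

lemma adj_of_max {w x : Fin L → Fin (2 ^ d)} (h : (GG d L).Adj w x)
    (hle : NN d L x ≤ NN d L w) : x = PP d L w := by
  rcases h.2 with h2 | h2
  · exact h2
  · by_cases hx : x = zz d L
    · subst hx
      rw [PP_zz] at h2
      exact absurd h2 h.1
    · exact absurd (h2 ▸ NN_PP_lt d L hx) (not_lt.2 hle)

lemma reach (u : Fin L → Fin (2 ^ d)) : (GG d L).Reachable u (zz d L) := by
  have key : ∀ n (u : Fin L → Fin (2 ^ d)), NN d L u = n →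
      (GG d L).Reachable u (zz d L) := by
    intro n
    induction n using Nat.strong_induction_on with
    | _ n ih =>
      intro u hn
      by_cases hu : u = zz d L
      · exact hu ▸ SimpleGraph.Reachable.refl _
      · have hadj : (GG d L).Adj u (PP d L u) :=
          ⟨fun h => PP_ne d L hu h.symm, Or.inl rfl⟩
        exact hadj.reachable.trans
          (ih (NN d L (PP d L u)) (hn ▸ NN_PP_lt d L hu) _ rfl)
  exact key _ u rfl

lemma GG_connected : (GG d L).Connected := by
  rw [SimpleGraph.connected_iff]
  exact ⟨fun u v => (reach d L u).trans (reach d L v).symm, ⟨zz d L⟩⟩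

lemma GG_acyclic : (GG d L).IsAcyclic := by
  intro v c hc
  obtain ⟨w, hwmem, hwmax⟩ := Finset.exists_max_image c.support.toFinset (NN d L)
    ⟨v, by simp [SimpleGraph.Walk.start_mem_support]⟩
  rw [List.mem_toFinset] at hwmem
  have hwmax' : ∀ y ∈ c.support, NN d L y ≤ NN d L w := fun y hy =>
    hwmax y (List.mem_toFinset.2 hy)
  set c' := c.rotate w hwmem with hc'def
  have hc' : c'.IsCycle := hc.rotate hwmem
  have hsupp : ∀ y ∈ c'.support, NN d L y ≤ NN d L w := by
    intro y hy
    rw [SimpleGraph.Walk.mem_support_iff] at hy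
    rcases hy with rfl | hy
    · exact le_refl _
    · exact hwmax' y ((SimpleGraph.Walk.mem_support_iff c).2
        (Or.inr ((SimpleGraph.Walk.support_rotate c w hwmem).mem_iff.1 hy)))
  -- first edge of the cycle
  obtain ⟨x, hwx, q, hq⟩ := SimpleGraph.Walk.not_nil_iff.1 hc'.not_nil
  -- last edge of the cycle, via the reverse
  have hnil2 : ¬ c'.reverse.Nil := by
    rw [SimpleGraph.Walk.not_nil_iff_lt_length, SimpleGraph.Walk.length_reverse]
    have := hc'.three_le_length; omega
  obtain ⟨y, hwy, q2, hq2⟩ := SimpleGraph.Walk.not_nil_iff.1 hnil2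
  have hx : x = PP d L w := adj_of_max d L hwx (hsupp x (by rw [hq]; simp))
  have hy : y = PP d L w := adj_of_max d L hwy (by
    apply hsupp
    have hm : y ∈ c'.reverse.support := by rw [hq2]; simp
    rwa [SimpleGraph.Walk.support_reverse, List.mem_reverse] at hm)
  have hedges : c'.edges = s(w, x) :: q.edges := by
    rw [hq, SimpleGraph.Walk.edges_cons]
  have hrev : c'.edges.reverse = s(w, y) :: q2.edges := by
    rw [← SimpleGraph.Walk.edges_reverse, hq2, SimpleGraph.Walk.edges_cons]
  have hnodup : (s(w, x) :: q.edges).Nodup := hedges ▸ hc'.edges_nodup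
  have hlen : 2 ≤ q.edges.length := by
    have h3 := hc'.three_le_length
    have hlq : c'.length = q.length + 1 := by rw [hq]; simp
    rw [SimpleGraph.Walk.length_edges]
    omega
  have heq : s(w, x) :: q.edges = q2.edges.reverse ++ [s(w, y)] := by
    have h := congrArg List.reverse hrev
    rw [List.reverse_reverse, List.reverse_cons] at h
    rw [← hedges, h]
  rcases hq2e : q2.edges.reverse with _ | ⟨a, t⟩
  · rw [hq2e, List.nil_append] at heq
    have : q.edges.length = 0 := by
      have := congrArg List.length heq
      simpa using this
    omega
  · rw [hq2e, List.cons_append] at heq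
    injection heq with h1 h2
    have hmem : s(w, y) ∈ q.edges := by rw [h2]; simp
    have hxy : s(w, x) = s(w, y) := by rw [hx, hy]
    rw [← hxy] at hmem
    exact (List.nodup_cons.1 hnodup).1 hmem

lemma weight_eq :
    graphWeight (treeDist d L) (GG d L).Adj
      = ∑ u, (if u ≠ zz d L then treeDist d L u (PP d L u) else 0) := by
  rw [graphWeight]
  have key : ∀ u v : Fin L → Fin (2 ^ d),
      (if (GG d L).Adj u v then treeDist d L u v else 0)
        = (if u ≠ zz d L ∧ v = PP d L u then treeDist d L u v else 0)
          + (if v ≠ zz d L ∧ u = PP d L v then treeDist d L u v else 0) := by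
    intro u v
    by_cases hA : (GG d L).Adj u v
    · obtain ⟨hne, hor⟩ := hA
      have hnotboth : ¬ ((u ≠ zz d L ∧ v = PP d L u) ∧ (v ≠ zz d L ∧ u = PP d L v)) := by
        rintro ⟨⟨hu', hv'⟩, ⟨hv'', hu''⟩⟩
        have h1 := NN_PP_lt d L hu'
        have h2 := NN_PP_lt d L hv''
        rw [← hv'] at h1
        rw [← hu''] at h2
        omega
      rcases hor with h | h
      · have hu' : u ≠ zz d L := by
          rintro rfl
          rw [PP_zz] at h
          exact hne h.symm
        rw [if_pos ⟨hne, Or.inl h⟩, if_pos ⟨hu', h⟩, if_neg, add_zero]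
        exact fun hc => hnotboth ⟨⟨hu', h⟩, hc⟩
      · have hv' : v ≠ zz d L := by
          rintro rfl
          rw [PP_zz] at h
          exact hne h
        rw [if_pos ⟨hne, Or.inr h⟩, if_neg, if_pos ⟨hv', h⟩, zero_add]
        exact fun hc => hnotboth ⟨hc, ⟨hv', h⟩⟩
    · rw [if_neg hA, if_neg, if_neg, add_zero]
      · rintro ⟨hv', h⟩
        exact hA ⟨fun he => PP_ne d L hv' (by rw [← h, he]), Or.inr h⟩
      · rintro ⟨hu', h⟩
        exact hA ⟨fun he => PP_ne d L hu' (by rw [← h, ← he]), Or.inl h⟩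
  simp_rw [key, Finset.sum_add_distrib]
  have e1 : ∀ u : Fin L → Fin (2 ^ d),
      (∑ v, if u ≠ zz d L ∧ v = PP d L u then treeDist d L u v else 0)
        = (if u ≠ zz d L then treeDist d L u (PP d L u) else 0) := by
    intro u
    simp_rw [ite_and]
    by_cases hu : u ≠ zz d L
    · simp only [if_pos hu]
      rw [Finset.sum_ite_eq' Finset.univ (PP d L u) (treeDist d L u)]
      simp
    · simp only [if_neg hu, Finset.sum_const_zero]
  have e2 : (∑ u, ∑ v, if v ≠ zz d L ∧ u = PP d L v then treeDist d L u v else 0)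
      = ∑ u, (if u ≠ zz d L then treeDist d L u (PP d L u) else 0) := by
    rw [Finset.sum_comm]
    apply Finset.sum_congr rfl
    intro v _
    simp_rw [ite_and]
    by_cases hv : v ≠ zz d L
    · simp only [if_pos hv]
      rw [Finset.sum_ite_eq' Finset.univ (PP d L v) (fun u => treeDist d L u v)]
      simp [treeDist_symm d L (PP d L v) v]
    · simp only [if_neg hv, Finset.sum_const_zero]
  simp_rw [e1]
  rw [e2]
  ring

/-- Summand function. -/
noncomputable def gg (d L : ℕ) (j : ℕ) : ℝ :=
  if j ≠ 0 then (2 : ℝ) ^ (L - Nat.log (2 ^ d) j) else 0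

lemma sum_bound (m : ℕ) (hm : 4 ≤ m) (L : ℕ) :
    (∑ j ∈ Finset.Ico 1 (m ^ L), 2 ^ (L - Nat.log m j)) ≤ 4 * m ^ L := by
  induction L with
  | zero => simp
  | succ L ih =>
    have h1 : (1 : ℕ) ≤ m ^ L := Nat.one_le_pow _ _ (by omega)
    have h2 : m ^ L ≤ m ^ (L + 1) := Nat.pow_le_pow_right (by omega) (by omega)
    rw [← Finset.sum_Ico_consecutive _ h1 h2]
    have hA : (∑ j ∈ Finset.Ico 1 (m ^ L), 2 ^ (L + 1 - Nat.log m j))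
        = 2 * ∑ j ∈ Finset.Ico 1 (m ^ L), 2 ^ (L - Nat.log m j) := by
      rw [Finset.mul_sum]
      apply Finset.sum_congr rfl
      intro j hj
      rw [Finset.mem_Ico] at hj
      have hlog : Nat.log m j < L := Nat.log_lt_of_lt_pow (by omega) hj.2
      rw [show L + 1 - Nat.log m j = (L - Nat.log m j) + 1 by omega, pow_succ]
      ring
    have hB : (∑ j ∈ Finset.Ico (m ^ L) (m ^ (L + 1)), 2 ^ (L + 1 - Nat.log m j))
        = 2 * (m ^ (L + 1) - m ^ L) := by
      rw [Finset.sum_congr rfl (fun j hj => ?_), Finset.sum_const, Nat.card_Ico,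
        smul_eq_mul, mul_comm]
      rw [Finset.mem_Ico] at hj
      rw [Nat.log_eq_of_pow_le_of_lt_pow hj.1 hj.2]
      simp
    rw [hA, hB]
    have h3 : 8 * m ^ L ≤ 2 * m ^ (L + 1) := by
      rw [pow_succ]
      nlinarith [h1]
    omega

end Stmt12Aux

open Stmt12Aux

/-- for `d ≥ 2`, the minimum spanning tree of the `n = (2^d)^L`-point
tree metric has weight at most `4n` (i.e. some spanning tree has weight `≤ 4n`). -/
theorem stmt12 (d L : ℕ) (hd : 2 ≤ d) :
    ∃ T : SimpleGraph (Fin L → Fin (2 ^ d)), T.IsTree ∧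
      graphWeight (treeDist d L) T.Adj ≤ 4 * (((2 ^ d) ^ L : ℕ) : ℝ) := by
  classical
  refine ⟨GG d L, ⟨GG_connected d L, GG_acyclic d L⟩, ?_⟩
  rw [weight_eq]
  have hpt : ∀ u : Fin L → Fin (2 ^ d),
      (if u ≠ zz d L then treeDist d L u (PP d L u) else 0)
        = gg d L ((ee d L u : ℕ)) := by
    intro u
    rw [gg]
    by_cases hu : u ≠ zz d L
    · rw [if_pos hu, treeDist_PP d L hu,
        if_pos (show ((ee d L u : ℕ)) ≠ 0 from fun h => hu ((eq_zz_iff d L u).2 h))]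
      rfl
    · rw [if_neg hu, if_neg]
      push_neg at hu
      simp only [ne_eq, not_not]
      exact (eq_zz_iff d L u).1 hu
  rw [Fintype.sum_equiv (ee d L) _ (fun t : Fin ((2 ^ d) ^ L) => gg d L (t : ℕ)) hpt]
  rw [Fin.sum_univ_eq_sum_range (fun j => gg d L j) ((2 ^ d) ^ L)]
  have hgg : (∑ j ∈ Finset.range ((2 ^ d) ^ L), gg d L j)
      = ∑ j ∈ Finset.Ico 1 ((2 ^ d) ^ L), ((2 : ℝ)) ^ (L - Nat.log (2 ^ d) j) := by
    simp only [gg]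
    rw [← Finset.sum_filter]
    congr 1
    ext j
    simp only [Finset.mem_filter, Finset.mem_range, Finset.mem_Ico, ne_eq]
    omega
  rw [hgg]
  have hcast : (∑ j ∈ Finset.Ico 1 ((2 ^ d) ^ L), ((2 : ℝ)) ^ (L - Nat.log (2 ^ d) j))
      = ((∑ j ∈ Finset.Ico 1 ((2 ^ d) ^ L), 2 ^ (L - Nat.log (2 ^ d) j) : ℕ) : ℝ) := by
    push_cast
    rfl
  rw [hcast]
  have hm4 : 4 ≤ 2 ^ d := by
    calc (4 : ℕ) = 2 ^ 2 := by norm_num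
      _ ≤ 2 ^ d := Nat.pow_le_pow_right (by norm_num) hd
  have hkey := sum_bound (2 ^ d) hm4 L
  calc ((∑ j ∈ Finset.Ico 1 ((2 ^ d) ^ L), 2 ^ (L - Nat.log (2 ^ d) j) : ℕ) : ℝ)
      ≤ ((4 * (2 ^ d) ^ L : ℕ) : ℝ) := Nat.cast_le.2 hkey
    _ = 4 * (((2 ^ d) ^ L : ℕ) : ℝ) := by push_cast; ring
end
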